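/- arXiv:2405.03508 — 3 statements merged into one kernel-verified Lean document; each statement's English description precedes it below -/
import Mathlib

section
/- The kernel polynomial K̃(X,Y,t) is irreducible in ℂ[X,Y,t]; consequently it is irreducible as a polynomial in Y with coefficients in ℂ(X,t), as a polynomial in X with coefficients in ℂ(Y,t), and as a polynomial in X and Y with coefficients in ℂ(t). -/
open IntermediateField
open scoped BigOperators Classical

set_option synthInstance.maxHeartbeats 1000000
set_option maxHeartbeats 1600000

noncomputable section

namespace QuadrantWalk

variable {K : Type} [Field K] [Algebra ℂ K]

/-- Evaluation of the step (Laurent) polynomial `S(X,Y) = ∑ w_{i,j} X^i Y^j`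
    at a pair of elements of a field. -/
def stepEval (St : Finset (ℤ × ℤ)) (w : ℤ × ℤ → ℂ) (u v : K) : K :=
  ∑ p ∈ St, algebraMap ℂ K (w p) * u ^ p.1 * v ^ p.2

/-- The step polynomial involves both `X` and `Y`. -/
def NotUnivariate (St : Finset (ℤ × ℤ)) : Prop :=
  (∃ p ∈ St, ∃ q ∈ St, p.1 ≠ q.1) ∧ ∃ p ∈ St, ∃ q ∈ St, p.2 ≠ q.2

/-- The kernel polynomial `K̃(X,Y,t) = X^mx * Y^my * (1 - t·S(X,Y))` as an element of
`ℂ[X,Y,t]`, with variables `0 ↦ X`, `1 ↦ Y`, `2 ↦ t`. -/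
def kernelPoly (St : Finset (ℤ × ℤ)) (w : ℤ × ℤ → ℂ) (mx my : ℕ) :
    MvPolynomial (Fin 3) ℂ :=
  MvPolynomial.X 0 ^ mx * MvPolynomial.X 1 ^ my -
    MvPolynomial.X 2 *
      ∑ p ∈ St, MvPolynomial.C (w p) *
        MvPolynomial.X 0 ^ (p.1 + (mx : ℤ)).toNat *
        MvPolynomial.X 1 ^ (p.2 + (my : ℤ)).toNat

/-- `-mx` (resp. `-my`) is the smallest `X`-exponent (resp. `Y`-exponent) of the model. -/
structure ExponentBounds (St : Finset (ℤ × ℤ)) (mx my : ℕ) : Prop where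
  lowerX : ∀ p ∈ St, -(mx : ℤ) ≤ p.1
  lowerY : ∀ p ∈ St, -(my : ℤ) ≤ p.2
  attainX : ∃ p ∈ St, p.1 = -(mx : ℤ)
  attainY : ∃ p ∈ St, p.2 = -(my : ℤ)

/-- `x`-adjacency : equal first coordinates and equal values of `S`. -/
def XAdj (St : Finset (ℤ × ℤ)) (w : ℤ × ℤ → ℂ) (a b : K × K) : Prop :=
  a.1 = b.1 ∧ stepEval St w a.1 a.2 = stepEval St w b.1 b.2

/-- `y`-adjacency : equal second coordinates and equal values of `S`. -/
def YAdj (St : Finset (ℤ × ℤ)) (w : ℤ × ℤ → ℂ) (a b : K × K) : Prop :=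
  a.2 = b.2 ∧ stepEval St w a.1 a.2 = stepEval St w b.1 b.2

/-- Adjacency. -/
def Adj (St : Finset (ℤ × ℤ)) (w : ℤ × ℤ → ℂ) (a b : K × K) : Prop :=
  XAdj St w a b ∨ YAdj St w a b

/-- The orbit of the walk: the equivalence class of `(x,y)` under the
reflexive-transitive closure of adjacency. -/
def orbit (St : Finset (ℤ × ℤ)) (w : ℤ × ℤ → ℂ) (x y : K) : Set (K × K) :=
  {a | Relation.ReflTransGen (Adj St w) (x, y) a}

/-- `k = ℂ(S(x,y))`. -/
def kF (St : Finset (ℤ × ℤ)) (w : ℤ × ℤ → ℂ) (x y : K) : IntermediateField ℂ K :=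
  adjoin ℂ {stepEval St w x y}

/-- `k(x) = ℂ(x, S(x,y))`. -/
def kxF (St : Finset (ℤ × ℤ)) (w : ℤ × ℤ → ℂ) (x y : K) : IntermediateField ℂ K :=
  adjoin ℂ {x, stepEval St w x y}

/-- `k(y) = ℂ(y, S(x,y))`. -/
def kyF (St : Finset (ℤ × ℤ)) (w : ℤ × ℤ → ℂ) (x y : K) : IntermediateField ℂ K :=
  adjoin ℂ {y, stepEval St w x y}

/-- `k(x,y) = ℂ(x,y)`. -/
def kxyF (x y : K) : IntermediateField ℂ K := adjoin ℂ {x, y}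

/-- `k(𝒪)`: the subfield generated over `k` by all coordinates of the orbit. -/
def orbitF (St : Finset (ℤ × ℤ)) (w : ℤ × ℤ → ℂ) (x y : K) : IntermediateField ℂ K :=
  adjoin ℂ ({stepEval St w x y} ∪ {z | ∃ a ∈ orbit St w x y, z = a.1 ∨ z = a.2})

/-- The standing hypotheses: nonzero weights, a non-univariate step polynomial,
`x, y` algebraically independent over `ℂ`, and `𝕂` an algebraic closure of `ℂ(x,y)`. -/
structure Setting (St : Finset (ℤ × ℤ)) (w : ℤ × ℤ → ℂ) (x y : K) : Prop where
  weight_ne : ∀ p ∈ St, w p ≠ 0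
  notUniv : NotUnivariate St
  indep : AlgebraicIndependent ℂ ![x, y]
  algClosed : IsAlgClosed K
  algebraic : Algebra.IsAlgebraic (kxyF x y) K

lemma self_mem_orbit (St : Finset (ℤ × ℤ)) (w : ℤ × ℤ → ℂ) (x y : K) :
    (x, y) ∈ orbit St w x y := Relation.ReflTransGen.refl

lemma x_mem_orbitF (St : Finset (ℤ × ℤ)) (w : ℤ × ℤ → ℂ) (x y : K) :
    x ∈ orbitF St w x y := by
  apply subset_adjoin
  exact Set.mem_union_right _ ⟨(x, y), self_mem_orbit St w x y, Or.inl rfl⟩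

lemma y_mem_orbitF (St : Finset (ℤ × ℤ)) (w : ℤ × ℤ → ℂ) (x y : K) :
    y ∈ orbitF St w x y := by
  apply subset_adjoin
  exact Set.mem_union_right _ ⟨(x, y), self_mem_orbit St w x y, Or.inr rfl⟩

lemma S_mem_orbitF (St : Finset (ℤ × ℤ)) (w : ℤ × ℤ → ℂ) (x y : K) :
    stepEval St w x y ∈ orbitF St w x y := by
  apply subset_adjoin
  exact Set.mem_union_left _ rfl

lemma x_mem_kxF (St : Finset (ℤ × ℤ)) (w : ℤ × ℤ → ℂ) (x y : K) :
    x ∈ kxF St w x y :=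
  subset_adjoin ℂ _ (Set.mem_insert _ _)

lemma S_mem_kxF (St : Finset (ℤ × ℤ)) (w : ℤ × ℤ → ℂ) (x y : K) :
    stepEval St w x y ∈ kxF St w x y :=
  subset_adjoin ℂ _ (Set.mem_insert_of_mem _ rfl)

lemma y_mem_kyF (St : Finset (ℤ × ℤ)) (w : ℤ × ℤ → ℂ) (x y : K) :
    y ∈ kyF St w x y :=
  subset_adjoin ℂ _ (Set.mem_insert _ _)

lemma S_mem_kyF (St : Finset (ℤ × ℤ)) (w : ℤ × ℤ → ℂ) (x y : K) :
    stepEval St w x y ∈ kyF St w x y :=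
  subset_adjoin ℂ _ (Set.mem_insert_of_mem _ rfl)

/-- The subgroup of `ℂ`-automorphisms of `M` fixing the subfield `E` pointwise. -/
def fixingAuts (E M : IntermediateField ℂ K) : Subgroup (↥M ≃ₐ[ℂ] ↥M) where
  carrier := {σ | ∀ (z : K) (_ : z ∈ E) (hzM : z ∈ M), σ ⟨z, hzM⟩ = ⟨z, hzM⟩}
  one_mem' := fun _ _ _ => rfl
  mul_mem' := by
    intro σ τ hσ hτ z hzE hzM
    show σ (τ ⟨z, hzM⟩) = ⟨z, hzM⟩
    rw [hτ z hzE hzM, hσ z hzE hzM]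
  inv_mem' := by
    intro σ hσ z hzE hzM
    show σ.symm ⟨z, hzM⟩ = ⟨z, hzM⟩
    conv_lhs => rw [← hσ z hzE hzM]
    exact σ.symm_apply_apply _

/-- The Galois group `G_x = Gal(k(𝒪)|k(x))`. -/
def Gx (St : Finset (ℤ × ℤ)) (w : ℤ × ℤ → ℂ) (x y : K) :
    Subgroup (↥(orbitF St w x y) ≃ₐ[ℂ] ↥(orbitF St w x y)) :=
  fixingAuts (kxF St w x y) (orbitF St w x y)

/-- The Galois group `G_y = Gal(k(𝒪)|k(y))`. -/
def Gy (St : Finset (ℤ × ℤ)) (w : ℤ × ℤ → ℂ) (x y : K) :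
    Subgroup (↥(orbitF St w x y) ≃ₐ[ℂ] ↥(orbitF St w x y)) :=
  fixingAuts (kyF St w x y) (orbitF St w x y)

/-- The Galois group `G_{xy} = Gal(k(𝒪)|k(x,y))`. -/
def Gxy (St : Finset (ℤ × ℤ)) (w : ℤ × ℤ → ℂ) (x y : K) :
    Subgroup (↥(orbitF St w x y) ≃ₐ[ℂ] ↥(orbitF St w x y)) :=
  fixingAuts (kxyF x y) (orbitF St w x y)

/-- Extend an automorphism of an intermediate field to a map on all of `K`
(by the identity outside). -/
def extendAut {M : IntermediateField ℂ K} (σ : ↥M ≃ₐ[ℂ] ↥M) (z : K) : K :=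
  if h : z ∈ M then (σ ⟨z, h⟩ : K) else z

/-- The coordinate-wise action of an automorphism on a `0`-chain. -/
def actChain {M : IntermediateField ℂ K} (σ : ↥M ≃ₐ[ℂ] ↥M)
    (γ : (K × K) →₀ ℂ) : (K × K) →₀ ℂ :=
  Finsupp.mapDomain (Prod.map (extendAut σ) (extendAut σ)) γ

/-- Evaluation of a polynomial `P(X,Y,t)` at `(u, v, 1/S(x,y))` for `(u,v) = a`. -/
def evalPt (St : Finset (ℤ × ℤ)) (w : ℤ × ℤ → ℂ) (x y : K)
    (P : MvPolynomial (Fin 3) ℂ) (a : K × K) : K :=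
  MvPolynomial.aeval ![a.1, a.2, (stepEval St w x y)⁻¹] P

/-- Evaluation of a polynomial `P(X,Y,t)` at `(x, y, 1/S(x,y))`. -/
def evalXY (St : Finset (ℤ × ℤ)) (w : ℤ × ℤ → ℂ) (x y : K)
    (P : MvPolynomial (Fin 3) ℂ) : K :=
  evalPt St w x y P (x, y)

/-- Evaluation of the fraction `A/B` at `(a.1, a.2, 1/S(x,y))`. -/
def fracEval (St : Finset (ℤ × ℤ)) (w : ℤ × ℤ → ℂ) (x y : K)
    (A B : MvPolynomial (Fin 3) ℂ) (a : K × K) : K :=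
  evalPt St w x y A a / evalPt St w x y B a

/-- Evaluation (orbit sum) of the fraction `A/B` on a `0`-chain. -/
def chainEval (St : Finset (ℤ × ℤ)) (w : ℤ × ℤ → ℂ) (x y : K)
    (A B : MvPolynomial (Fin 3) ℂ) (γ : (K × K) →₀ ℂ) : K :=
  γ.sum fun a c => algebraMap ℂ K c * fracEval St w x y A B a

/-- A `0`-chain cancels decoupled fractions: the orbit sum of every regular fraction
of the form `F(X,t) + G(Y,t)` on it vanishes. -/
def CancelsDecoupled (St : Finset (ℤ × ℤ)) (w : ℤ × ℤ → ℂ) (mx my : ℕ)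
    (x y : K) (α : (K × K) →₀ ℂ) : Prop :=
  ∀ A₁ B₁ A₂ B₂ : MvPolynomial (Fin 3) ℂ,
    A₁ ∈ MvPolynomial.supported ℂ ({0, 2} : Set (Fin 3)) →
    B₁ ∈ MvPolynomial.supported ℂ ({0, 2} : Set (Fin 3)) →
    A₂ ∈ MvPolynomial.supported ℂ ({1, 2} : Set (Fin 3)) →
    B₂ ∈ MvPolynomial.supported ℂ ({1, 2} : Set (Fin 3)) →
    ¬ kernelPoly St w mx my ∣ B₁ → ¬ kernelPoly St w mx my ∣ B₂ →
    (α.sum fun a c =>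
      algebraMap ℂ K c * (fracEval St w x y A₁ B₁ a + fracEval St w x y A₂ B₂ a)) = 0

/-- The field of fractions `ℂ(X,Y,t)`. -/
abbrev FF : Type := FractionRing (MvPolynomial (Fin 3) ℂ)

/-- The inclusion of `ℂ[X,Y,t]` into `ℂ(X,Y,t)`. -/
def toFF (P : MvPolynomial (Fin 3) ℂ) : FF := algebraMap (MvPolynomial (Fin 3) ℂ) FF P

/-- The regular fraction `A/B` admits a Galois decoupling:
`A/B = F + G + K̃·R` with `F ∈ ℂ(X,t)`, `G ∈ ℂ(Y,t)` and `R` regular. -/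
def AdmitsDecoupling (St : Finset (ℤ × ℤ)) (w : ℤ × ℤ → ℂ) (mx my : ℕ)
    (A B : MvPolynomial (Fin 3) ℂ) : Prop :=
  ∃ F₁ F₂ G₁ G₂ R₁ R₂ : MvPolynomial (Fin 3) ℂ,
    F₁ ∈ MvPolynomial.supported ℂ ({0, 2} : Set (Fin 3)) ∧
    F₂ ∈ MvPolynomial.supported ℂ ({0, 2} : Set (Fin 3)) ∧
    G₁ ∈ MvPolynomial.supported ℂ ({1, 2} : Set (Fin 3)) ∧
    G₂ ∈ MvPolynomial.supported ℂ ({1, 2} : Set (Fin 3)) ∧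
    ¬ kernelPoly St w mx my ∣ F₂ ∧ ¬ kernelPoly St w mx my ∣ G₂ ∧
    ¬ kernelPoly St w mx my ∣ R₂ ∧
    toFF A / toFF B =
      toFF F₁ / toFF F₂ + toFF G₁ / toFF G₂ +
        toFF (kernelPoly St w mx my) * (toFF R₁ / toFF R₂)

/-- `(I, J) = (A/B, Cc/D)` is a pair of Galois invariants: `I - J = K̃·R` with `R` regular. -/
def IsInvariantPair (St : Finset (ℤ × ℤ)) (w : ℤ × ℤ → ℂ) (mx my : ℕ)
    (A B Cc D : MvPolynomial (Fin 3) ℂ) : Prop :=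
  ∃ R₁ R₂ : MvPolynomial (Fin 3) ℂ, ¬ kernelPoly St w mx my ∣ R₂ ∧
    toFF A / toFF B - toFF Cc / toFF D =
      toFF (kernelPoly St w mx my) * (toFF R₁ / toFF R₂)

/-- A constant pair of Galois invariants: both members are equivalent to a
common fraction `c ∈ ℂ(t)` modulo `K̃`. -/
def IsConstantPair (St : Finset (ℤ × ℤ)) (w : ℤ × ℤ → ℂ) (mx my : ℕ)
    (A B Cc D : MvPolynomial (Fin 3) ℂ) : Prop :=
  IsInvariantPair St w mx my A B Cc D ∧
  ∃ c₁ c₂ : MvPolynomial (Fin 3) ℂ,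
    c₁ ∈ MvPolynomial.supported ℂ ({2} : Set (Fin 3)) ∧
    c₂ ∈ MvPolynomial.supported ℂ ({2} : Set (Fin 3)) ∧ c₂ ≠ 0 ∧
    IsInvariantPair St w mx my A B c₁ c₂ ∧ IsInvariantPair St w mx my Cc D c₁ c₂

/-- `(γx, γy)` is a pseudo-decoupling of `(x,y)`. -/
def PseudoDecoupling (St : Finset (ℤ × ℤ)) (w : ℤ × ℤ → ℂ) (mx my : ℕ)
    (x y : K) (γx γy : (K × K) →₀ ℂ) : Prop :=
  ∀ A B : MvPolynomial (Fin 3) ℂ, ¬ kernelPoly St w mx my ∣ B →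
    AdmitsDecoupling St w mx my A B →
      fracEval St w x y A B (x, y) =
          chainEval St w x y A B γx + chainEval St w x y A B γy ∧
        chainEval St w x y A B γx ∈ kxF St w x y ∧
        chainEval St w x y A B γy ∈ kyF St w x y

/-- `(gx, gy, a)` is a decoupling of `(x,y)` in the orbit. -/
def IsDecoupling (St : Finset (ℤ × ℤ)) (w : ℤ × ℤ → ℂ) (mx my : ℕ)
    (x y : K) (gx gy a : (K × K) →₀ ℂ) : Prop :=
  Finsupp.single (x, y) (1 : ℂ) = gx + gy + a ∧
  (∀ σ ∈ Gx St w x y, actChain σ gx = gx) ∧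
  (∀ σ ∈ Gy St w x y, actChain σ gy = gy) ∧
  CancelsDecoupled St w mx my x y a

/-- The `x`-part of the boundary of a `1`-chain. -/
def boundaryX (St : Finset (ℤ × ℤ)) (w : ℤ × ℤ → ℂ)
    (c : ((K × K) × (K × K)) →₀ ℂ) : (K × K) →₀ ℂ :=
  c.sum fun e coeff =>
    if XAdj St w e.1 e.2 then
      coeff • (Finsupp.single e.2 (1 : ℂ) - Finsupp.single e.1 (1 : ℂ)) else 0

/-- The `y`-part of the boundary of a `1`-chain. -/
def boundaryY (St : Finset (ℤ × ℤ)) (w : ℤ × ℤ → ℂ)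
    (c : ((K × K) × (K × K)) →₀ ℂ) : (K × K) →₀ ℂ :=
  c.sum fun e coeff =>
    if YAdj St w e.1 e.2 then
      coeff • (Finsupp.single e.2 (1 : ℂ) - Finsupp.single e.1 (1 : ℂ)) else 0

/-- The `0`-chain induced by a bicolored loop. -/
def IsBicoloredChain (St : Finset (ℤ × ℤ)) (w : ℤ × ℤ → ℂ) (x y : K)
    (α : (K × K) →₀ ℂ) : Prop :=
  ∃ (n : ℕ) (b : ℕ → K × K), 0 < n ∧ b (2 * n) = b 0 ∧
    (∀ j < 2 * n, b j ∈ orbit St w x y) ∧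
    (∀ i < n, XAdj St w (b (2 * i)) (b (2 * i + 1)) ∧
      YAdj St w (b (2 * i + 1)) (b (2 * i + 2))) ∧
    α = ∑ j ∈ Finset.range (2 * n), ((-1 : ℂ) ^ (j + 1)) • Finsupp.single (b j) (1 : ℂ)

/-- The `0`-chain `ω = (1/|𝒪|) ∑_{a ∈ 𝒪} a`. -/
def omegaChain (St : Finset (ℤ × ℤ)) (w : ℤ × ℤ → ℂ) (x y : K)
    (h : (orbit St w x y).Finite) : (K × K) →₀ ℂ :=
  ((h.toFinset.card : ℂ))⁻¹ • ∑ a ∈ h.toFinset, Finsupp.single a (1 : ℂ)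

/-- The average `[G]·γ = (1/|G|) ∑_{σ ∈ G} σ·γ` of a `0`-chain under a group. -/
def groupAverage {M : IntermediateField ℂ K} (G : Subgroup (↥M ≃ₐ[ℂ] ↥M))
    (γ : (K × K) →₀ ℂ) : (K × K) →₀ ℂ :=
  ((Nat.card G : ℂ))⁻¹ • ∑ᶠ σ ∈ (G : Set (↥M ≃ₐ[ℂ] ↥M)), actChain σ γ

/-- `ℂ[X,t]` (two variables: `0` and `1`). -/
abbrev MvP2 : Type := MvPolynomial (Fin 2) ℂ

/-- `ℂ(X,t)`, the fraction field of `ℂ[X,t]`. -/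
abbrev CXt : Type := FractionRing MvP2

/-- Constants `ℂ → ℂ(X,t)`. -/
def cconst : ℂ →+* CXt := (algebraMap MvP2 CXt).comp (MvPolynomial.C)

/-- The first generator of `ℂ(X,t)`. -/
def gen0 : CXt := algebraMap MvP2 CXt (MvPolynomial.X 0)

/-- The second generator of `ℂ(X,t)`. -/
def gen1 : CXt := algebraMap MvP2 CXt (MvPolynomial.X 1)

/-- The kernel polynomial viewed as a polynomial in `Y` over `ℂ(X,t)`. -/
def kernelInY (St : Finset (ℤ × ℤ)) (w : ℤ × ℤ → ℂ) (mx my : ℕ) :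
    Polynomial CXt :=
  MvPolynomial.eval₂ ((Polynomial.C : CXt →+* Polynomial CXt).comp cconst)
    ![Polynomial.C gen0, Polynomial.X, Polynomial.C gen1]
    (kernelPoly St w mx my)

/-- The kernel polynomial viewed as a polynomial in `X` over `ℂ(Y,t)`. -/
def kernelInX (St : Finset (ℤ × ℤ)) (w : ℤ × ℤ → ℂ) (mx my : ℕ) :
    Polynomial CXt :=
  MvPolynomial.eval₂ ((Polynomial.C : CXt →+* Polynomial CXt).comp cconst)
    ![Polynomial.X, Polynomial.C gen0, Polynomial.C gen1]
    (kernelPoly St w mx my)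

/-- The kernel polynomial viewed as a polynomial in `X, Y` over `ℂ(t)`. -/
def kernelInXY (St : Finset (ℤ × ℤ)) (w : ℤ × ℤ → ℂ) (mx my : ℕ) :
    MvPolynomial (Fin 2) (RatFunc ℂ) :=
  MvPolynomial.eval₂
    ((MvPolynomial.C : RatFunc ℂ →+* MvPolynomial (Fin 2) (RatFunc ℂ)).comp
      (RatFunc.C : ℂ →+* RatFunc ℂ))
    ![MvPolynomial.X 0, MvPolynomial.X 1, MvPolynomial.C RatFunc.X]
    (kernelPoly St w mx my)

/-- The specialization `K̃(x, Y, 1/S(x,y))` as a polynomial in `Y` over `k(x)`. -/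
def kernelAtX (St : Finset (ℤ × ℤ)) (w : ℤ × ℤ → ℂ) (mx my : ℕ) (x y : K) :
    Polynomial ↥(kxF St w x y) :=
  MvPolynomial.aeval
    ![Polynomial.C (⟨x, x_mem_kxF St w x y⟩ : kxF St w x y), Polynomial.X,
      Polynomial.C (⟨(stepEval St w x y)⁻¹, inv_mem (S_mem_kxF St w x y)⟩ : kxF St w x y)]
    (kernelPoly St w mx my)

/-- The specialization `K̃(X, y, 1/S(x,y))` as a polynomial in `X` over `k(y)`. -/
def kernelAtY (St : Finset (ℤ × ℤ)) (w : ℤ × ℤ → ℂ) (mx my : ℕ) (x y : K) :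
    Polynomial ↥(kyF St w x y) :=
  MvPolynomial.aeval
    ![Polynomial.X, Polynomial.C (⟨y, y_mem_kyF St w x y⟩ : kyF St w x y),
      Polynomial.C (⟨(stepEval St w x y)⁻¹, inv_mem (S_mem_kyF St w x y)⟩ : kyF St w x y)]
    (kernelPoly St w mx my)

/-- Values of regular fractions with numerator and denominator supported on a set
of variables. -/
def regRange (St : Finset (ℤ × ℤ)) (w : ℤ × ℤ → ℂ) (x y : K) (mx my : ℕ)
    (s : Set (Fin 3)) : Set K :=
  {z | ∃ A B : MvPolynomial (Fin 3) ℂ,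
    A ∈ MvPolynomial.supported ℂ s ∧ B ∈ MvPolynomial.supported ℂ s ∧
    ¬ kernelPoly St w mx my ∣ B ∧ z = evalXY St w x y A / evalXY St w x y B}

end QuadrantWalk


section KernelIrreducibleAux



namespace QWAux

/-- A linear polynomial `C b + X * C a` with `a ≠ 0` and `a, b` relatively prime
is irreducible over a domain. -/
theorem irreducible_linear {R : Type*} [CommRing R] [IsDomain R] {a b : R}
    (ha : a ≠ 0) (h : IsRelPrime a b) :
    Irreducible (Polynomial.C b + Polynomial.X * Polynomial.C a) := by
  set f : Polynomial R := Polynomial.C b + Polynomial.X * Polynomial.C a with hf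
  have hform : f = Polynomial.C a * Polynomial.X + Polynomial.C b := by ring
  have hdeg : f.natDegree = 1 := by rw [hform, Polynomial.natDegree_linear ha]
  have hf0 : f ≠ 0 := fun h0 => by simp [h0] at hdeg
  have key : ∀ p q : Polynomial R, f = p * q → p.natDegree = 0 → IsUnit p := by
    intro p q hpq hp
    obtain ⟨c, rfl⟩ := Polynomial.natDegree_eq_zero.mp hp
    refine Polynomial.isUnit_C.mpr (h ?_ ?_)
    · refine ⟨q.coeff 1, ?_⟩
      have := congrArg (fun r => Polynomial.coeff r 1) hpq
      simpa [hform, Polynomial.coeff_C_mul] using this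
    · refine ⟨q.coeff 0, ?_⟩
      have := congrArg (fun r => Polynomial.coeff r 0) hpq
      simpa [hform, Polynomial.coeff_C_mul] using this
  constructor
  · intro hu
    have := Polynomial.natDegree_eq_zero_of_isUnit hu
    omega
  · intro p q hpq
    have hp0 : p ≠ 0 := by rintro rfl; simp at hpq; exact hf0 hpq
    have hq0 : q ≠ 0 := by rintro rfl; simp at hpq; exact hf0 hpq
    have hsum : p.natDegree + q.natDegree = 1 := by
      rw [← Polynomial.natDegree_mul hp0 hq0, ← hpq, hdeg]
    rcases Nat.eq_zero_or_pos p.natDegree with hp | hp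
    · exact Or.inl (key p q hpq hp)
    · exact Or.inr (key q p (by rw [hpq, mul_comm]) (by omega))

/-- An element that is prime and divides no element of `M` maps to a prime
in the localization at `M`. -/
theorem prime_algebraMap_of_isLocalization {R S : Type*} [CommRing R] [CommRing S]
    [Nontrivial S] [Algebra R S] (M : Submonoid R) [IsLocalization M S]
    (hM : M ≤ nonZeroDivisors R) {p : R} (hp : Prime p) (hd : ∀ m ∈ M, ¬ p ∣ m) :
    Prime (algebraMap R S p) := by
  have hinj := IsLocalization.injective S hM
  have hne : algebraMap R S p ≠ 0 := fun h0 => hp.1 (hinj (by simpa using h0))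
  rw [← Ideal.span_singleton_prime hne]
  have hmap : Ideal.span {algebraMap R S p} = (Ideal.span {p}).map (algebraMap R S) := by
    rw [Ideal.map_span, Set.image_singleton]
  rw [hmap]
  refine IsLocalization.isPrime_of_isPrime_disjoint M S _
    ((Ideal.span_singleton_prime hp.1).mpr hp) ?_
  rw [Set.disjoint_left]
  intro m hm hmem
  exact hd m hm (Ideal.mem_span_singleton.mp hmem)

/-- `A[X]` is the localization of `R[X]` at constants from `M`, when the
localization map `R → A` is injective. -/
theorem isLocalization_polynomial {R A : Type*} [CommRing R] [CommRing A] [Algebra R A]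
    (M : Submonoid R) [IsLocalization M A] (hinj : Function.Injective (algebraMap R A)) :
    letI : Algebra (Polynomial R) (Polynomial A) :=
      (Polynomial.mapRingHom (algebraMap R A)).toAlgebra
    IsLocalization (M.map (Polynomial.C : R →+* Polynomial R)) (Polynomial A) := by
  letI : Algebra (Polynomial R) (Polynomial A) :=
    (Polynomial.mapRingHom (algebraMap R A)).toAlgebra
  have halg : ∀ p : Polynomial R,
      algebraMap (Polynomial R) (Polynomial A) p = p.map (algebraMap R A) := fun _ => rfl
  refine ⟨⟨?_, ?_, ?_⟩⟩
  · rintro ⟨_, s, hs, rfl⟩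
    have hu := IsLocalization.map_units A ⟨s, hs⟩
    have : algebraMap (Polynomial R) (Polynomial A) (Polynomial.C s)
        = Polynomial.C (algebraMap R A s) := by rw [halg, Polynomial.map_C]
    rw [this]
    exact hu.map (Polynomial.C : A →+* Polynomial A)
  · intro z
    induction z using Polynomial.induction_on' with
    | monomial n a =>
      obtain ⟨⟨r, m⟩, hr⟩ := IsLocalization.surj M a
      have hr' : a * algebraMap R A (m : R) = algebraMap R A r := hr
      refine ⟨⟨Polynomial.monomial n r, ⟨Polynomial.C (m : R), ⟨(m : R), m.2, rfl⟩⟩⟩, ?_⟩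
      show Polynomial.monomial n a * algebraMap (Polynomial R) (Polynomial A) (Polynomial.C (m : R))
          = algebraMap (Polynomial R) (Polynomial A) (Polynomial.monomial n r)
      rw [halg, halg, Polynomial.map_C, Polynomial.map_monomial, mul_comm,
        Polynomial.C_mul_monomial, mul_comm (algebraMap R A (m : R)) a, hr']
    | add p q hp hq =>
      obtain ⟨⟨rp, mp⟩, hrp⟩ := hp
      obtain ⟨⟨rq, mq⟩, hrq⟩ := hq
      have hrp' : p * algebraMap (Polynomial R) (Polynomial A) (mp : Polynomial R)
          = algebraMap (Polynomial R) (Polynomial A) rp := hrp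
      have hrq' : q * algebraMap (Polynomial R) (Polynomial A) (mq : Polynomial R)
          = algebraMap (Polynomial R) (Polynomial A) rq := hrq
      refine ⟨⟨rp * (mq : Polynomial R) + rq * (mp : Polynomial R), mp * mq⟩, ?_⟩
      show (p + q) * algebraMap (Polynomial R) (Polynomial A) ((mp * mq : _) : Polynomial R)
          = algebraMap (Polynomial R) (Polynomial A)
              (rp * (mq : Polynomial R) + rq * (mp : Polynomial R))
      rw [Submonoid.coe_mul, map_mul, map_add, map_mul, map_mul, ← hrp', ← hrq']
      ring
  · intro p q hpq
    refine ⟨1, ?_⟩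
    have := Polynomial.map_injective _ hinj (by simpa [halg] using hpq)
    rw [this]

/-- `MvPolynomial σ A` is the localization of `MvPolynomial σ R` at constants from `M`,
when the localization map `R → A` is injective. -/
theorem isLocalization_mvPolynomial {σ : Type*} {R A : Type*} [CommRing R] [CommRing A]
    [Algebra R A] (M : Submonoid R) [IsLocalization M A]
    (hinj : Function.Injective (algebraMap R A)) :
    letI : Algebra (MvPolynomial σ R) (MvPolynomial σ A) :=
      (MvPolynomial.map (algebraMap R A)).toAlgebra
    IsLocalization (M.map (MvPolynomial.C : R →+* MvPolynomial σ R)) (MvPolynomial σ A) := by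
  letI : Algebra (MvPolynomial σ R) (MvPolynomial σ A) :=
    (MvPolynomial.map (algebraMap R A)).toAlgebra
  have halg : ∀ p : MvPolynomial σ R,
      algebraMap (MvPolynomial σ R) (MvPolynomial σ A) p
        = MvPolynomial.map (algebraMap R A) p := fun _ => rfl
  refine ⟨⟨?_, ?_, ?_⟩⟩
  · rintro ⟨_, s, hs, rfl⟩
    have hu := IsLocalization.map_units A ⟨s, hs⟩
    have : algebraMap (MvPolynomial σ R) (MvPolynomial σ A) (MvPolynomial.C s)
        = MvPolynomial.C (algebraMap R A s) := by rw [halg, MvPolynomial.map_C]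
    rw [this]
    exact hu.map (MvPolynomial.C : A →+* MvPolynomial σ A)
  · intro z
    induction z using MvPolynomial.induction_on' with
    | monomial u a =>
      obtain ⟨⟨r, m⟩, hr⟩ := IsLocalization.surj M a
      have hr' : a * algebraMap R A (m : R) = algebraMap R A r := hr
      refine ⟨⟨MvPolynomial.monomial u r, ⟨MvPolynomial.C (m : R), ⟨(m : R), m.2, rfl⟩⟩⟩, ?_⟩
      show MvPolynomial.monomial u a
            * algebraMap (MvPolynomial σ R) (MvPolynomial σ A) (MvPolynomial.C (m : R))
          = algebraMap (MvPolynomial σ R) (MvPolynomial σ A) (MvPolynomial.monomial u r)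
      rw [halg, halg, MvPolynomial.map_C, MvPolynomial.map_monomial, mul_comm,
        MvPolynomial.C_mul_monomial, mul_comm (algebraMap R A (m : R)) a, hr']
    | add p q hp hq =>
      obtain ⟨⟨rp, mp⟩, hrp⟩ := hp
      obtain ⟨⟨rq, mq⟩, hrq⟩ := hq
      have hrp' : p * algebraMap (MvPolynomial σ R) (MvPolynomial σ A) (mp : MvPolynomial σ R)
          = algebraMap (MvPolynomial σ R) (MvPolynomial σ A) rp := hrp
      have hrq' : q * algebraMap (MvPolynomial σ R) (MvPolynomial σ A) (mq : MvPolynomial σ R)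
          = algebraMap (MvPolynomial σ R) (MvPolynomial σ A) rq := hrq
      refine ⟨⟨rp * (mq : MvPolynomial σ R) + rq * (mp : MvPolynomial σ R), mp * mq⟩, ?_⟩
      show (p + q) * algebraMap (MvPolynomial σ R) (MvPolynomial σ A)
            ((mp * mq : _) : MvPolynomial σ R)
          = algebraMap (MvPolynomial σ R) (MvPolynomial σ A)
              (rp * (mq : MvPolynomial σ R) + rq * (mp : MvPolynomial σ R))
      rw [Submonoid.coe_mul, map_mul, map_add, map_mul, map_mul, ← hrp', ← hrq']
      ring
  · intro p q hpq
    refine ⟨1, ?_⟩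
    have := MvPolynomial.map_injective _ hinj (by simpa [halg] using hpq)
    rw [this]

/-- `X i` is prime in a multivariate polynomial ring over `ℂ` (finitely many variables). -/
theorem prime_X_mv {n : ℕ} (i : Fin (n + 1)) :
    Prime (MvPolynomial.X i : MvPolynomial (Fin (n + 1)) ℂ) := by
  have h0 : Prime (MvPolynomial.X 0 : MvPolynomial (Fin (n + 1)) ℂ) := by
    rw [← MulEquiv.prime_iff (MvPolynomial.finSuccEquiv ℂ n).toMulEquiv]
    have : (MvPolynomial.finSuccEquiv ℂ n).toMulEquiv (MvPolynomial.X 0) = Polynomial.X := by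
      simp [MvPolynomial.finSuccEquiv_X_zero]
    rw [this]
    exact Polynomial.prime_X
  rw [← MulEquiv.prime_iff (MvPolynomial.renameEquiv ℂ (Equiv.swap i 0)).toMulEquiv]
  have : (MvPolynomial.renameEquiv ℂ (Equiv.swap i 0)).toMulEquiv (MvPolynomial.X i)
      = MvPolynomial.X 0 := by
    simp [MvPolynomial.renameEquiv_apply, MvPolynomial.rename_X]
  rw [this]
  exact h0

end QWAux


namespace QWAux
open MvPolynomial

/-- Coefficient of a weighted sum of two-variable monomials. -/
theorem coeff_wsum {σ : Type*} [DecidableEq σ] (i j : σ) (St : Finset (ℤ × ℤ))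
    (w : ℤ × ℤ → ℂ) (a b : ℤ × ℤ → ℕ) (d : σ →₀ ℕ) :
    MvPolynomial.coeff d (∑ p ∈ St, (MvPolynomial.C (w p) : MvPolynomial σ ℂ)
        * MvPolynomial.X i ^ a p * MvPolynomial.X j ^ b p)
      = ∑ p ∈ St, if Finsupp.single i (a p) + Finsupp.single j (b p) = d then w p else 0 := by
  rw [MvPolynomial.coeff_sum]
  refine Finset.sum_congr rfl fun p _ => ?_
  rw [MvPolynomial.C_mul_X_pow_eq_monomial, MvPolynomial.X_pow_eq_monomial,
    MvPolynomial.monomial_mul, mul_one, MvPolynomial.coeff_monomial]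

theorem coeff_wsum_self {σ : Type*} [DecidableEq σ] {i j : σ} (hij : i ≠ j)
    {St : Finset (ℤ × ℤ)} (w : ℤ × ℤ → ℂ) {a b : ℤ × ℤ → ℕ}
    (hinj : ∀ p ∈ St, ∀ q ∈ St, a p = a q → b p = b q → p = q)
    {p₀ : ℤ × ℤ} (h₀ : p₀ ∈ St) :
    MvPolynomial.coeff (Finsupp.single i (a p₀) + Finsupp.single j (b p₀))
        (∑ p ∈ St, (MvPolynomial.C (w p) : MvPolynomial σ ℂ)
          * MvPolynomial.X i ^ a p * MvPolynomial.X j ^ b p) = w p₀ := by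
  rw [coeff_wsum]
  rw [Finset.sum_eq_single_of_mem p₀ h₀, if_pos rfl]
  intro q hq hne
  rw [if_neg]
  intro heq
  have hai := DFunLike.congr_fun heq i
  have haj := DFunLike.congr_fun heq j
  simp only [Finsupp.add_apply, Finsupp.single_eq_same,
    Finsupp.single_eq_of_ne hij.symm, Finsupp.single_eq_of_ne hij, add_zero, zero_add] at hai haj
  exact hne (hinj q hq p₀ h₀ hai haj)

theorem not_X_dvd_wsum {σ : Type*} [DecidableEq σ] {i j : σ} (hij : i ≠ j)
    {St : Finset (ℤ × ℤ)} {w : ℤ × ℤ → ℂ} {a b : ℤ × ℤ → ℕ}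
    (hw : ∀ p ∈ St, w p ≠ 0)
    (hinj : ∀ p ∈ St, ∀ q ∈ St, a p = a q → b p = b q → p = q)
    {p₀ : ℤ × ℤ} (h₀ : p₀ ∈ St) (ha₀ : a p₀ = 0) :
    ¬ (MvPolynomial.X i : MvPolynomial σ ℂ) ∣
        ∑ p ∈ St, (MvPolynomial.C (w p) : MvPolynomial σ ℂ)
          * MvPolynomial.X i ^ a p * MvPolynomial.X j ^ b p := by
  rintro ⟨g, hg⟩
  have h1 := coeff_wsum_self hij w hinj h₀
  rw [hg, ha₀] at h1
  simp only [Finsupp.single_zero, zero_add] at h1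
  rw [MvPolynomial.coeff_X_mul'] at h1
  rw [if_neg] at h1
  · exact hw p₀ h₀ h1.symm
  · simp [Finsupp.single_eq_of_ne' hij.symm]

end QWAux


namespace QuadrantWalk
open MvPolynomial



/-- The exponent encodings. -/
def eaQ (mx : ℕ) (p : ℤ × ℤ) : ℕ := (p.1 + (mx : ℤ)).toNat
def ebQ (my : ℕ) (p : ℤ × ℤ) : ℕ := (p.2 + (my : ℤ)).toNat

theorem enc_inj {St : Finset (ℤ × ℤ)} {mx my : ℕ} (hb : ExponentBounds St mx my) :
    ∀ p ∈ St, ∀ q ∈ St, eaQ mx p = eaQ mx q → ebQ my p = ebQ my q → p = q := by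
  intro p hp q hq h1 h2
  have l1 := hb.lowerX p hp
  have l2 := hb.lowerX q hq
  have l3 := hb.lowerY p hp
  have l4 := hb.lowerY q hq
  unfold eaQ at h1
  unfold ebQ at h2
  have e1 : p.1 = q.1 := by omega
  have e2 : p.2 = q.2 := by omega
  exact Prod.ext e1 e2

theorem kernelPoly_eq (St : Finset (ℤ × ℤ)) (w : ℤ × ℤ → ℂ) (mx my : ℕ) :
    kernelPoly St w mx my
      = X 0 ^ mx * X 1 ^ my
        - X 2 * ∑ p ∈ St, C (w p) * X 0 ^ eaQ mx p * X 1 ^ ebQ my p := rfl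

/-- The coefficient of the kernel polynomial at the full monomial of a step `q`. -/
theorem coeff_kernel {St : Finset (ℤ × ℤ)} (w : ℤ × ℤ → ℂ) {mx my : ℕ}
    (hb : ExponentBounds St mx my) {q : ℤ × ℤ} (hq : q ∈ St) :
    MvPolynomial.coeff
        (Finsupp.single 0 (eaQ mx q) + Finsupp.single 1 (ebQ my q) + Finsupp.single 2 1)
        (kernelPoly St w mx my) = - w q := by
  set d : Fin 3 →₀ ℕ :=
    Finsupp.single 0 (eaQ mx q) + Finsupp.single 1 (ebQ my q) + Finsupp.single 2 1 with hd
  rw [kernelPoly_eq]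
  rw [MvPolynomial.coeff_sub]
  have hA : MvPolynomial.coeff d ((X 0 : MvPolynomial (Fin 3) ℂ) ^ mx * X 1 ^ my) = 0 := by
    rw [MvPolynomial.X_pow_eq_monomial, MvPolynomial.X_pow_eq_monomial,
      MvPolynomial.monomial_mul, mul_one, MvPolynomial.coeff_monomial, if_neg]
    intro h
    have := DFunLike.congr_fun h (2 : Fin 3)
    simp [hd, Finsupp.single_eq_of_ne, Finsupp.single_apply] at this
  have hB : MvPolynomial.coeff d
      ((X 2 : MvPolynomial (Fin 3) ℂ) * ∑ p ∈ St, C (w p) * X 0 ^ eaQ mx p * X 1 ^ ebQ my p)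
      = w q := by
    rw [MvPolynomial.coeff_X_mul']
    rw [if_pos]
    · have hsub : d - Finsupp.single 2 1 = Finsupp.single 0 (eaQ mx q) + Finsupp.single 1 (ebQ my q) := by
        rw [hd, add_tsub_cancel_right]
      rw [hsub]
      exact QWAux.coeff_wsum_self (by decide) w (enc_inj hb) hq
    · simp [hd, Finsupp.single_apply]
  rw [hA, hB, zero_sub]

/-- Positive degree in `Y`. -/
theorem degY_pos {St : Finset (ℤ × ℤ)} (w : ℤ × ℤ → ℂ) {mx my : ℕ}
    (hw : ∀ p ∈ St, w p ≠ 0) (hU : NotUnivariate St) (hb : ExponentBounds St mx my) :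
    1 ≤ MvPolynomial.degreeOf 1 (kernelPoly St w mx my) := by
  obtain ⟨p, hp, q, hq, hne⟩ := hU.2
  have l1 := hb.lowerY p hp
  have l2 := hb.lowerY q hq
  -- one of p, q has second coordinate > -my
  obtain ⟨r, hr, hrb⟩ : ∃ r ∈ St, 1 ≤ ebQ my r := by
    rcases lt_or_gt_of_ne hne with h | h
    · exact ⟨q, hq, by unfold ebQ; omega⟩
    · exact ⟨p, hp, by unfold ebQ; omega⟩
  by_contra hcon
  push_neg at hcon
  have hmem : (Finsupp.single 0 (eaQ mx r) + Finsupp.single 1 (ebQ my r) + Finsupp.single 2 1)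
      ∈ (kernelPoly St w mx my).support := by
    rw [MvPolynomial.mem_support_iff, coeff_kernel w hb hr]
    simpa using hw r hr
  have hlt : MvPolynomial.degreeOf 1 (kernelPoly St w mx my) < 1 := by omega
  have := (MvPolynomial.degreeOf_lt_iff (by norm_num)).mp hlt _ hmem
  simp [Finsupp.single_apply, Finsupp.add_apply] at this
  omega

/-- Positive degree in `X`. -/
theorem degX_pos {St : Finset (ℤ × ℤ)} (w : ℤ × ℤ → ℂ) {mx my : ℕ}
    (hw : ∀ p ∈ St, w p ≠ 0) (hU : NotUnivariate St) (hb : ExponentBounds St mx my) :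
    1 ≤ MvPolynomial.degreeOf 0 (kernelPoly St w mx my) := by
  obtain ⟨p, hp, q, hq, hne⟩ := hU.1
  have l1 := hb.lowerX p hp
  have l2 := hb.lowerX q hq
  obtain ⟨r, hr, hrb⟩ : ∃ r ∈ St, 1 ≤ eaQ mx r := by
    rcases lt_or_gt_of_ne hne with h | h
    · exact ⟨q, hq, by unfold eaQ; omega⟩
    · exact ⟨p, hp, by unfold eaQ; omega⟩
  by_contra hcon
  push_neg at hcon
  have hmem : (Finsupp.single 0 (eaQ mx r) + Finsupp.single 1 (ebQ my r) + Finsupp.single 2 1)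
      ∈ (kernelPoly St w mx my).support := by
    rw [MvPolynomial.mem_support_iff, coeff_kernel w hb hr]
    simpa using hw r hr
  have hlt : MvPolynomial.degreeOf 0 (kernelPoly St w mx my) < 1 := by omega
  have := (MvPolynomial.degreeOf_lt_iff (by norm_num)).mp hlt _ hmem
  simp [Finsupp.single_apply, Finsupp.add_apply] at this
  omega


/-- STEP 1: the kernel polynomial is irreducible in `ℂ[X,Y,t]`. -/
theorem kernel_irreducible {St : Finset (ℤ × ℤ)} {w : ℤ × ℤ → ℂ} {mx my : ℕ}
    (hw : ∀ p ∈ St, w p ≠ 0) (hU : NotUnivariate St) (hb : ExponentBounds St mx my) :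
    Irreducible (kernelPoly St w mx my) := by
  classical
  -- the equivalence moving `t` to the front
  set s02 : Equiv.Perm (Fin 3) := Equiv.swap 0 2 with hs02
  set Ψ : MvPolynomial (Fin 3) ℂ ≃ₐ[ℂ] Polynomial (MvPolynomial (Fin 2) ℂ) :=
    (renameEquiv ℂ s02).trans (finSuccEquiv ℂ 2) with hΨ
  rw [← MulEquiv.irreducible_iff Ψ]
  have hsw0 : s02 0 = 2 := Equiv.swap_apply_left 0 2
  have hsw1 : s02 1 = 1 := Equiv.swap_apply_of_ne_of_ne (by decide) (by decide)
  have hsw2 : s02 2 = 0 := Equiv.swap_apply_right 0 2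
  have f1 : finSuccEquiv ℂ 2 (X (1 : Fin 3)) = Polynomial.C (X 0) := by
    have h : (1 : Fin 3) = Fin.succ 0 := rfl
    rw [h, finSuccEquiv_X_succ]
  have f2 : finSuccEquiv ℂ 2 (X (2 : Fin 3)) = Polynomial.C (X 1) := by
    have h : (2 : Fin 3) = Fin.succ 1 := rfl
    rw [h, finSuccEquiv_X_succ]
  have fC : ∀ c : ℂ, finSuccEquiv ℂ 2 (C c) = Polynomial.C (C c) := fun c => by
    simp [finSuccEquiv_apply]
  have hΨapp : ∀ z, Ψ z = finSuccEquiv ℂ 2 (rename s02 z) := fun z => rfl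
  -- images of the two pieces
  set A₂ : MvPolynomial (Fin 2) ℂ := X 1 ^ mx * X 0 ^ my with hA₂
  set B₂ : MvPolynomial (Fin 2) ℂ := ∑ p ∈ St, C (w p) * X 1 ^ eaQ mx p * X 0 ^ ebQ my p
    with hB₂
  have hA : Ψ ((X 0 : MvPolynomial (Fin 3) ℂ) ^ mx * X 1 ^ my) = Polynomial.C A₂ := by
    rw [hΨapp, map_mul, map_pow, map_pow, rename_X, rename_X, hsw0, hsw1,
      map_mul, map_pow, map_pow, f2, f1, ← Polynomial.C_pow, ← Polynomial.C_pow,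
      ← Polynomial.C_mul]
  have hB : Ψ (∑ p ∈ St, (C (w p) : MvPolynomial (Fin 3) ℂ) * X 0 ^ eaQ mx p * X 1 ^ ebQ my p)
      = Polynomial.C B₂ := by
    rw [hΨapp, map_sum, map_sum, hB₂, map_sum]
    refine Finset.sum_congr rfl fun p hp => ?_
    simp only [map_mul, map_pow, rename_C, rename_X, hsw0, hsw1, fC, f1, f2]
  have hX2 : Ψ (X 2 : MvPolynomial (Fin 3) ℂ) = Polynomial.X := by
    rw [hΨapp, rename_X, hsw2, finSuccEquiv_X_zero]
  have hTB : Ψ ((X 2 : MvPolynomial (Fin 3) ℂ)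
        * ∑ p ∈ St, C (w p) * X 0 ^ eaQ mx p * X 1 ^ ebQ my p)
      = Polynomial.X * Polynomial.C B₂ := by
    rw [map_mul, hX2, hB]
  have hQ : Ψ (kernelPoly St w mx my)
      = Polynomial.C A₂ + Polynomial.X * Polynomial.C (-B₂) := by
    rw [kernelPoly_eq, map_sub, hA, hTB, map_neg]
    ring
  rw [hQ]
  -- the two polynomials A₂ and B₂ are relatively prime
  have hinj := enc_inj hb
  have hinj' : ∀ p ∈ St, ∀ q ∈ St, ebQ my p = ebQ my q → eaQ mx p = eaQ mx q → p = q :=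
    fun p hp q hq h1 h2 => hinj p hp q hq h2 h1
  obtain ⟨px, hpx, hpx0⟩ := hb.attainX
  obtain ⟨py, hpy, hpy0⟩ := hb.attainY
  have hax : eaQ mx px = 0 := by unfold eaQ; omega
  have hay : ebQ my py = 0 := by unfold ebQ; omega
  have hnd1 : ¬ (X 1 : MvPolynomial (Fin 2) ℂ) ∣ B₂ :=
    QWAux.not_X_dvd_wsum (by decide) hw hinj hpx hax
  have hB₂' : B₂ = ∑ p ∈ St, C (w p) * X 0 ^ ebQ my p * X 1 ^ eaQ mx p := by
    rw [hB₂]; refine Finset.sum_congr rfl fun p hp => ?_; ring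
  have hnd0 : ¬ (X 0 : MvPolynomial (Fin 2) ℂ) ∣ B₂ := by
    rw [hB₂']
    exact QWAux.not_X_dvd_wsum (by decide) hw hinj' hpy hay
  have hrel1 : IsRelPrime (X 1 : MvPolynomial (Fin 2) ℂ) B₂ :=
    ((QWAux.prime_X_mv (1 : Fin 2)).irreducible.isRelPrime_iff_not_dvd).mpr hnd1
  have hrel0 : IsRelPrime (X 0 : MvPolynomial (Fin 2) ℂ) B₂ :=
    ((QWAux.prime_X_mv (0 : Fin 2)).irreducible.isRelPrime_iff_not_dvd).mpr hnd0
  have hrelAB : IsRelPrime A₂ B₂ := (hrel1.pow_left).mul_left (hrel0.pow_left)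
  have hBne : B₂ ≠ 0 := fun h => hnd0 (h ▸ dvd_zero _)
  exact QWAux.irreducible_linear (neg_ne_zero.mpr hBne) hrelAB.symm.neg_left


theorem kernel_map_prime {St : Finset (ℤ × ℤ)} {w : ℤ × ℤ → ℂ} {mx my : ℕ}
    (hw : ∀ p ∈ St, w p ≠ 0) (hU : NotUnivariate St) (hb : ExponentBounds St mx my)
    (e : Equiv.Perm (Fin 3)) (i : Fin 3) (hei : e i = 0)
    (hdeg : 1 ≤ MvPolynomial.degreeOf i (kernelPoly St w mx my)) :
    Irreducible (Polynomial.map (algebraMap MvP2 CXt)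
      (finSuccEquiv ℂ 2 (rename (⇑e) (kernelPoly St w mx my)))) := by
  classical
  set P := kernelPoly St w mx my with hP
  set Q : Polynomial MvP2 := finSuccEquiv ℂ 2 (rename (⇑e) P) with hQ
  have hirrP : Irreducible P := kernel_irreducible hw hU hb
  have hirrQ : Irreducible Q := by
    have h := (MulEquiv.irreducible_iff ((renameEquiv ℂ e).trans (finSuccEquiv ℂ 2))).mpr hirrP
    exact h
  have hprimeQ : Prime Q := (UniqueFactorizationMonoid.irreducible_iff_prime).mp hirrQ
  have hQdeg : 1 ≤ Q.natDegree := by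
    rw [hQ, natDegree_finSuccEquiv]
    have h := degreeOf_rename_of_injective (e.injective) i (p := P)
    rw [hei] at h
    rw [h]; exact hdeg
  letI : Algebra (Polynomial MvP2) (Polynomial CXt) :=
    (Polynomial.mapRingHom (algebraMap MvP2 CXt)).toAlgebra
  haveI hloc := QWAux.isLocalization_polynomial (A := CXt) (nonZeroDivisors MvP2)
    (IsFractionRing.injective MvP2 CXt)
  have hM : (nonZeroDivisors MvP2).map (Polynomial.C : MvP2 →+* Polynomial MvP2)
      ≤ nonZeroDivisors (Polynomial MvP2) := by
    rintro x ⟨s, hs, rfl⟩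
    exact mem_nonZeroDivisors_of_ne_zero
      (Polynomial.C_ne_zero.mpr (nonZeroDivisors.ne_zero hs))
  have hd : ∀ m ∈ (nonZeroDivisors MvP2).map (Polynomial.C : MvP2 →+* Polynomial MvP2),
      ¬ Q ∣ m := by
    rintro x ⟨s, hs, rfl⟩ ⟨g, hg⟩
    have hC0 : (Polynomial.C s : Polynomial MvP2) ≠ 0 :=
      Polynomial.C_ne_zero.mpr (nonZeroDivisors.ne_zero hs)
    have hQ0 : Q ≠ 0 := by rintro h0; rw [h0, zero_mul] at hg; exact hC0 hg
    have hg0 : g ≠ 0 := by rintro h0; rw [h0, mul_zero] at hg; exact hC0 hg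
    have hnat := Polynomial.natDegree_mul hQ0 hg0
    rw [← hg, Polynomial.natDegree_C] at hnat
    omega
  have h2 := QWAux.prime_algebraMap_of_isLocalization (S := Polynomial CXt)
    ((nonZeroDivisors MvP2).map (Polynomial.C : MvP2 →+* Polynomial MvP2)) hM hprimeQ hd
  have h3 : Prime (Polynomial.map (algebraMap MvP2 CXt) Q) := h2
  exact h3.irreducible

theorem kernelInY_eq_map (St : Finset (ℤ × ℤ)) (w : ℤ × ℤ → ℂ) (mx my : ℕ) :
    kernelInY St w mx my = Polynomial.map (algebraMap MvP2 CXt)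
      (finSuccEquiv ℂ 2 (rename (⇑(Equiv.swap (0 : Fin 3) 1)) (kernelPoly St w mx my))) := by
  classical
  have f1 : finSuccEquiv ℂ 2 (X (1 : Fin 3)) = Polynomial.C (X 0) := by
    have h : (1 : Fin 3) = Fin.succ 0 := rfl
    rw [h, finSuccEquiv_X_succ]
  have f2 : finSuccEquiv ℂ 2 (X (2 : Fin 3)) = Polynomial.C (X 1) := by
    have h : (2 : Fin 3) = Fin.succ 1 := rfl
    rw [h, finSuccEquiv_X_succ]
  have fC : ∀ c : ℂ, finSuccEquiv ℂ 2 (C c) = Polynomial.C (C c) := fun c => by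
    simp [finSuccEquiv_apply]
  have hsw0 : Equiv.swap (0 : Fin 3) 1 0 = 1 := Equiv.swap_apply_left 0 1
  have hsw1 : Equiv.swap (0 : Fin 3) 1 1 = 0 := Equiv.swap_apply_right 0 1
  have hsw2 : Equiv.swap (0 : Fin 3) 1 2 = 2 :=
    Equiv.swap_apply_of_ne_of_ne (by decide) (by decide)
  have hhom : (MvPolynomial.eval₂Hom ((Polynomial.C : CXt →+* Polynomial CXt).comp cconst)
        ![Polynomial.C gen0, Polynomial.X, Polynomial.C gen1])
      = ((Polynomial.mapRingHom (algebraMap MvP2 CXt)).comp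
          (finSuccEquiv ℂ 2).toAlgHom.toRingHom).comp
          (rename (⇑(Equiv.swap (0 : Fin 3) 1)) : _ →ₐ[ℂ] _).toRingHom := by
    apply MvPolynomial.ringHom_ext
    · intro c
      simp [cconst, fC, rename_C]
    · intro i
      fin_cases i
      · simp [hsw0, f1, gen0, rename_X, Polynomial.map_C, Polynomial.map_X]
      · simp [hsw1, rename_X, finSuccEquiv_X_zero, Polynomial.map_C, Polynomial.map_X]
      · simp [hsw2, f2, gen1, rename_X, Polynomial.map_C, Polynomial.map_X]
  have := RingHom.congr_fun hhom (kernelPoly St w mx my)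
  simpa [kernelInY] using this

theorem kernelInX_eq_map (St : Finset (ℤ × ℤ)) (w : ℤ × ℤ → ℂ) (mx my : ℕ) :
    kernelInX St w mx my = Polynomial.map (algebraMap MvP2 CXt)
      (finSuccEquiv ℂ 2 (rename (⇑(Equiv.refl (Fin 3))) (kernelPoly St w mx my))) := by
  classical
  have f1 : finSuccEquiv ℂ 2 (X (1 : Fin 3)) = Polynomial.C (X 0) := by
    have h : (1 : Fin 3) = Fin.succ 0 := rfl
    rw [h, finSuccEquiv_X_succ]
  have f2 : finSuccEquiv ℂ 2 (X (2 : Fin 3)) = Polynomial.C (X 1) := by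
    have h : (2 : Fin 3) = Fin.succ 1 := rfl
    rw [h, finSuccEquiv_X_succ]
  have fC : ∀ c : ℂ, finSuccEquiv ℂ 2 (C c) = Polynomial.C (C c) := fun c => by
    simp [finSuccEquiv_apply]
  have hhom : (MvPolynomial.eval₂Hom ((Polynomial.C : CXt →+* Polynomial CXt).comp cconst)
        ![Polynomial.X, Polynomial.C gen0, Polynomial.C gen1])
      = ((Polynomial.mapRingHom (algebraMap MvP2 CXt)).comp
          (finSuccEquiv ℂ 2).toAlgHom.toRingHom).comp
          (rename (⇑(Equiv.refl (Fin 3))) : _ →ₐ[ℂ] _).toRingHom := by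
    apply MvPolynomial.ringHom_ext
    · intro c
      simp [cconst, fC, rename_C]
    · intro i
      fin_cases i
      · simp [rename_X, finSuccEquiv_X_zero, Polynomial.map_C, Polynomial.map_X]
      · simp [f1, gen0, rename_X, Polynomial.map_C, Polynomial.map_X]
      · simp [f2, gen1, rename_X, Polynomial.map_C, Polynomial.map_X]
  have := RingHom.congr_fun hhom (kernelPoly St w mx my)
  simpa [kernelInX] using this

theorem kernelInY_irreducible' {St : Finset (ℤ × ℤ)} {w : ℤ × ℤ → ℂ} {mx my : ℕ}
    (hw : ∀ p ∈ St, w p ≠ 0) (hU : NotUnivariate St) (hb : ExponentBounds St mx my) :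
    Irreducible (kernelInY St w mx my) := by
  rw [kernelInY_eq_map]
  exact kernel_map_prime hw hU hb (Equiv.swap (0 : Fin 3) 1) (1 : Fin 3)
    (by decide) (degY_pos w hw hU hb)

theorem kernelInX_irreducible' {St : Finset (ℤ × ℤ)} {w : ℤ × ℤ → ℂ} {mx my : ℕ}
    (hw : ∀ p ∈ St, w p ≠ 0) (hU : NotUnivariate St) (hb : ExponentBounds St mx my) :
    Irreducible (kernelInX St w mx my) := by
  rw [kernelInX_eq_map]
  exact kernel_map_prime hw hU hb (Equiv.refl (Fin 3)) (0 : Fin 3)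
    (by decide) (degX_pos w hw hU hb)

/-- The equivalence `Fin 3 ≃ Option (Fin 2)` sending `2` to `none`. -/
def eOpt : Fin 3 ≃ Option (Fin 2) where
  toFun := ![some 0, some 1, none]
  invFun := fun o => o.elim 2 Fin.castSucc
  left_inv := by decide
  right_inv := by decide

theorem kernelInXY_irreducible' {St : Finset (ℤ × ℤ)} {w : ℤ × ℤ → ℂ} {mx my : ℕ}
    (hw : ∀ p ∈ St, w p ≠ 0) (hU : NotUnivariate St) (hb : ExponentBounds St mx my) :
    Irreducible (kernelInXY St w mx my) := by
  classical
  set P := kernelPoly St w mx my with hP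
  set eqv : MvPolynomial (Fin 3) ℂ ≃ₐ[ℂ] MvPolynomial (Fin 2) (Polynomial ℂ) :=
    (renameEquiv ℂ eOpt).trans (optionEquivRight ℂ (Fin 2)) with heqv
  -- generator computations for eqv
  have hself : ∀ z, eqv z = optionEquivRight ℂ (Fin 2) (rename (⇑eOpt) z) := fun z => rfl
  have he0 : eOpt 0 = some 0 := rfl
  have he1 : eOpt 1 = some 1 := rfl
  have he2 : eOpt 2 = none := rfl
  have g0 : eqv (X (0 : Fin 3)) = X 0 := by
    rw [hself, rename_X, he0, optionEquivRight_X_some]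
  have g1 : eqv (X (1 : Fin 3)) = X 1 := by
    rw [hself, rename_X, he1, optionEquivRight_X_some]
  have g2 : eqv (X (2 : Fin 3)) = MvPolynomial.C Polynomial.X := by
    rw [hself, rename_X, he2, optionEquivRight_X_none]
  have gC : ∀ c : ℂ, eqv (C c) = MvPolynomial.C (Polynomial.C c) := fun c => by
    rw [hself, rename_C, optionEquivRight_C]
  set P₄ : MvPolynomial (Fin 2) (Polynomial ℂ) := eqv P with hP₄
  have hirrP : Irreducible P := kernel_irreducible hw hU hb
  have hirrP₄ : Irreducible P₄ := (MulEquiv.irreducible_iff eqv).mpr hirrP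
  have hprimeP₄ : Prime P₄ := (UniqueFactorizationMonoid.irreducible_iff_prime).mp hirrP₄
  -- localization setup
  letI : Algebra (MvPolynomial (Fin 2) (Polynomial ℂ)) (MvPolynomial (Fin 2) (RatFunc ℂ)) :=
    (MvPolynomial.map (algebraMap (Polynomial ℂ) (RatFunc ℂ))).toAlgebra
  haveI hloc := QWAux.isLocalization_mvPolynomial (σ := Fin 2) (A := RatFunc ℂ)
    (nonZeroDivisors (Polynomial ℂ)) (IsFractionRing.injective (Polynomial ℂ) (RatFunc ℂ))
  have hM : (nonZeroDivisors (Polynomial ℂ)).map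
        (MvPolynomial.C : Polynomial ℂ →+* MvPolynomial (Fin 2) (Polynomial ℂ))
      ≤ nonZeroDivisors (MvPolynomial (Fin 2) (Polynomial ℂ)) := by
    rintro x ⟨s, hs, rfl⟩
    exact mem_nonZeroDivisors_of_ne_zero
      ((map_ne_zero_iff (MvPolynomial.C : Polynomial ℂ →+* MvPolynomial (Fin 2) (Polynomial ℂ))
        (MvPolynomial.C_injective _ _)).mpr (nonZeroDivisors.ne_zero hs))
  -- `P₄` divides no nonzero constant-in-`t` element
  have hd : ∀ m ∈ (nonZeroDivisors (Polynomial ℂ)).map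
      (MvPolynomial.C : Polynomial ℂ →+* MvPolynomial (Fin 2) (Polynomial ℂ)), ¬ P₄ ∣ m := by
    rintro x ⟨s, hs, rfl⟩ ⟨g, hg⟩
    have hs0 : s ≠ 0 := nonZeroDivisors.ne_zero hs
    have hCs0 : (MvPolynomial.C s : MvPolynomial (Fin 2) (Polynomial ℂ)) ≠ 0 :=
      (map_ne_zero_iff (MvPolynomial.C : Polynomial ℂ →+* MvPolynomial (Fin 2) (Polynomial ℂ))
        (MvPolynomial.C_injective _ _)).mpr hs0
    -- identify eqv.symm (C s) with aeval (X 2) s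
    have hcompC : ∀ m : Polynomial ℂ,
        eqv ((Polynomial.aeval (X (2 : Fin 3) : MvPolynomial (Fin 3) ℂ)) m)
          = MvPolynomial.C m := by
      intro m
      have hhom : (eqv.toAlgHom.toRingHom.comp
            (Polynomial.aeval (X (2 : Fin 3) : MvPolynomial (Fin 3) ℂ)).toRingHom)
          = (MvPolynomial.C : Polynomial ℂ →+* MvPolynomial (Fin 2) (Polynomial ℂ)) := by
        apply Polynomial.ringHom_ext
        · intro c
          simp [gC, MvPolynomial.algebraMap_eq]
        · simp [g2]
      exact RingHom.congr_fun hhom m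
    set z : MvPolynomial (Fin 3) ℂ := Polynomial.aeval (X (2 : Fin 3)) s with hz
    have hzeq : eqv.symm (MvPolynomial.C s) = z := by
      apply eqv.injective
      rw [AlgEquiv.apply_symm_apply, hcompC]
    have hz0 : z ≠ 0 := by
      intro h0
      apply hCs0
      have := congrArg eqv (hzeq.trans h0)
      simpa using this
    -- pull the divisibility back
    have hgg := congrArg eqv.symm hg
    rw [map_mul, AlgEquiv.symm_apply_apply, hzeq] at hgg
    -- move to a univariate picture extracting Y
    set Ψ₁ : MvPolynomial (Fin 3) ℂ ≃ₐ[ℂ] Polynomial MvP2 :=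
      (renameEquiv ℂ (Equiv.swap (0 : Fin 3) 1)).trans (finSuccEquiv ℂ 2) with hΨ₁
    have hΨs : Ψ₁ z = Polynomial.C ((Polynomial.aeval (X (1 : Fin 2) : MvP2)) s) := by
      have hhom : (Ψ₁.toAlgHom.toRingHom.comp
            (Polynomial.aeval (X (2 : Fin 3) : MvPolynomial (Fin 3) ℂ)).toRingHom)
          = ((Polynomial.C : MvP2 →+* Polynomial MvP2).comp
              ((Polynomial.aeval (X (1 : Fin 2) : MvP2)).toRingHom :
                Polynomial ℂ →+* MvP2)) := by
        apply Polynomial.ringHom_ext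
        · intro c
          have hf : Ψ₁ (C c) = Polynomial.C (C c) := by
            show finSuccEquiv ℂ 2 (rename (⇑(Equiv.swap (0 : Fin 3) 1)) (C c))
              = Polynomial.C (C c)
            rw [rename_C]
            simp [finSuccEquiv_apply]
          simp [hf, MvPolynomial.algebraMap_eq]
        · have hx : Ψ₁ (X (2 : Fin 3)) = Polynomial.C (X 1) := by
            show finSuccEquiv ℂ 2 (rename (⇑(Equiv.swap (0 : Fin 3) 1)) (X (2 : Fin 3)))
              = Polynomial.C (X 1)
            rw [rename_X]
            have hsw2 : Equiv.swap (0 : Fin 3) 1 2 = 2 :=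
              Equiv.swap_apply_of_ne_of_ne (by decide) (by decide)
            rw [hsw2]
            have h2 : (2 : Fin 3) = Fin.succ 1 := rfl
            rw [h2, finSuccEquiv_X_succ]
          simp [hx]
      exact RingHom.congr_fun hhom s
    have hPdeg : 1 ≤ (Ψ₁ P).natDegree := by
      show 1 ≤ (finSuccEquiv ℂ 2 (rename (⇑(Equiv.swap (0 : Fin 3) 1)) P)).natDegree
      rw [natDegree_finSuccEquiv]
      have h := degreeOf_rename_of_injective (Equiv.swap (0 : Fin 3) 1).injective (1 : Fin 3)
        (p := P)
      rw [Equiv.swap_apply_right] at h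
      rw [h]
      exact degY_pos w hw hU hb
    have hPne : P ≠ 0 := fun h0 => hz0 (by rw [hgg, h0, zero_mul])
    have hgne : eqv.symm g ≠ 0 := fun h0 => hz0 (by rw [hgg, h0, mul_zero])
    have hΨP : Ψ₁ P ≠ 0 := fun h0 => hPne (by simpa using (EmbeddingLike.map_eq_zero_iff).mp h0)
    have hΨg : Ψ₁ (eqv.symm g) ≠ 0 :=
      fun h0 => hgne (by simpa using (EmbeddingLike.map_eq_zero_iff).mp h0)
    have hmul := congrArg Ψ₁ hgg
    rw [map_mul, hΨs] at hmul
    have hnat := Polynomial.natDegree_mul hΨP hΨg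
    rw [← hmul, Polynomial.natDegree_C] at hnat
    omega
  -- transfer primality to the localization
  have h2 := QWAux.prime_algebraMap_of_isLocalization
    (S := MvPolynomial (Fin 2) (RatFunc ℂ))
    ((nonZeroDivisors (Polynomial ℂ)).map
      (MvPolynomial.C : Polynomial ℂ →+* MvPolynomial (Fin 2) (Polynomial ℂ)))
    hM hprimeP₄ hd
  have h3 : Prime (MvPolynomial.map (algebraMap (Polynomial ℂ) (RatFunc ℂ)) P₄) := h2
  -- identify the image with `kernelInXY`
  have heq : kernelInXY St w mx my
      = MvPolynomial.map (algebraMap (Polynomial ℂ) (RatFunc ℂ)) P₄ := by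
    have hhom : (MvPolynomial.eval₂Hom
          ((MvPolynomial.C : RatFunc ℂ →+* MvPolynomial (Fin 2) (RatFunc ℂ)).comp
            (RatFunc.C : ℂ →+* RatFunc ℂ))
          ![MvPolynomial.X 0, MvPolynomial.X 1, MvPolynomial.C RatFunc.X])
        = ((MvPolynomial.map (algebraMap (Polynomial ℂ) (RatFunc ℂ)) :
              MvPolynomial (Fin 2) (Polynomial ℂ) →+* MvPolynomial (Fin 2) (RatFunc ℂ)).comp
            eqv.toAlgHom.toRingHom) := by
      apply MvPolynomial.ringHom_ext
      · intro c
        simp [gC, RatFunc.algebraMap_C]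
      · intro i
        fin_cases i
        · simp [g0]
        · simp [g1]
        · simp [g2, RatFunc.algebraMap_X]
    have := RingHom.congr_fun hhom P
    simpa [kernelInXY] using this
  rw [heq]
  exact h3.irreducible

end QuadrantWalk

end KernelIrreducibleAux

namespace QuadrantWalk

/-- The kernel polynomial `K̃(X,Y,t)` is irreducible in `ℂ[X,Y,t]`;
consequently it is irreducible in `ℂ(X,t)[Y]`, in `ℂ(Y,t)[X]` and in `ℂ(t)[X,Y]`. -/
theorem stmt1 (St : Finset (ℤ × ℤ)) (w : ℤ × ℤ → ℂ) (mx my : ℕ)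
    (hw : ∀ p ∈ St, w p ≠ 0) (hU : NotUnivariate St)
    (hb : ExponentBounds St mx my) :
    Irreducible (kernelPoly St w mx my) ∧
    Irreducible (kernelInY St w mx my) ∧
    Irreducible (kernelInX St w mx my) ∧
    Irreducible (kernelInXY St w mx my) :=
  ⟨kernel_irreducible hw hU hb, kernelInY_irreducible' hw hU hb,
    kernelInX_irreducible' hw hU hb, kernelInXY_irreducible' hw hU hb⟩

end QuadrantWalk
end
end

section
/- If σ : 𝕂 → 𝕂 is a k(x)-algebra endomorphism, then for every (u,v) in the orbit 𝒪, the pair σ·(u,v) = (σ(u), σ(v)) is again in 𝒪. Similarly, the orbit is stable under every k(y)-algebra endomorphism of 𝕂. -/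
open IntermediateField
open scoped BigOperators Classical

set_option synthInstance.maxHeartbeats 1000000
set_option maxHeartbeats 1600000

noncomputable section

namespace QuadrantWalk

lemma stepEval_map {K : Type} [Field K] [Algebra ℂ K]
    (St : Finset (ℤ × ℤ)) (w : ℤ × ℤ → ℂ) (σ : K →ₐ[ℂ] K) (u v : K) :
    stepEval St w (σ u) (σ v) = σ (stepEval St w u v) := by
  simp [stepEval, map_sum, map_mul, map_zpow₀, AlgHom.commutes]

lemma adj_map {K : Type} [Field K] [Algebra ℂ K]
    (St : Finset (ℤ × ℤ)) (w : ℤ × ℤ → ℂ) (σ : K →ₐ[ℂ] K) {a b : K × K}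
    (h : Adj St w a b) : Adj St w (σ a.1, σ a.2) (σ b.1, σ b.2) := by
  rcases h with ⟨h1, h2⟩ | ⟨h1, h2⟩
  · exact Or.inl ⟨by simp [h1], by simp [stepEval_map, h2]⟩
  · exact Or.inr ⟨by simp [h1], by simp [stepEval_map, h2]⟩

lemma orbit_map {K : Type} [Field K] [Algebra ℂ K]
    (St : Finset (ℤ × ℤ)) (w : ℤ × ℤ → ℂ) (x y : K) (σ : K →ₐ[ℂ] K)
    {a : K × K} (h : a ∈ orbit St w x y) :
    Relation.ReflTransGen (Adj St w) (σ x, σ y) (σ a.1, σ a.2) :=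
  Relation.ReflTransGen.lift (fun p : K × K => (σ p.1, σ p.2))
    (fun _ _ hab => adj_map St w σ hab) _ _ h

/-- the orbit is setwise stable under every `k(x)`-algebra endomorphism
of `𝕂`, and likewise under every `k(y)`-algebra endomorphism of `𝕂`. -/
theorem stmt4 {K : Type} [Field K] [Algebra ℂ K]
    (St : Finset (ℤ × ℤ)) (w : ℤ × ℤ → ℂ) (x y : K)
    (hset : Setting St w x y) :
    (∀ σ : K →ₐ[ℂ] K, (∀ z ∈ kxF St w x y, σ z = z) →
      ∀ a ∈ orbit St w x y, (σ a.1, σ a.2) ∈ orbit St w x y) ∧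
    (∀ σ : K →ₐ[ℂ] K, (∀ z ∈ kyF St w x y, σ z = z) →
      ∀ a ∈ orbit St w x y, (σ a.1, σ a.2) ∈ orbit St w x y) := by
  constructor
  · intro σ hfix a ha
    have hx : σ x = x := hfix x (x_mem_kxF St w x y)
    have hS : σ (stepEval St w x y) = stepEval St w x y :=
      hfix _ (S_mem_kxF St w x y)
    have hstep : Relation.ReflTransGen (Adj St w) (x, y) (σ x, σ y) := by
      refine Relation.ReflTransGen.single (Or.inl ⟨by simp [hx], ?_⟩)
      simp only
      rw [stepEval_map, hS]
    exact hstep.trans (orbit_map St w x y σ ha)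
  · intro σ hfix a ha
    have hy : σ y = y := hfix y (y_mem_kyF St w x y)
    have hS : σ (stepEval St w x y) = stepEval St w x y :=
      hfix _ (S_mem_kyF St w x y)
    have hstep : Relation.ReflTransGen (Adj St w) (x, y) (σ x, σ y) := by
      refine Relation.ReflTransGen.single (Or.inr ⟨by simp [hy], ?_⟩)
      simp only
      rw [stepEval_map, hS]
    exact hstep.trans (orbit_map St w x y σ ha)

end QuadrantWalk
end
end

section
/- Assume the orbit 𝒪 is finite and let ω be the 0-chain (1/|𝒪|) Σ_{a∈𝒪} a. Then for every regular fraction H ∈ ℂ(X,Y,t), the orbit sum H_ω is a Galois invariant: σ(H_ω) = H_ω for every σ in the group of the walk G, hence H_ω ∈ k(x) ∩ k(y). -/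
open IntermediateField
open scoped BigOperators Classical

set_option synthInstance.maxHeartbeats 1000000
set_option maxHeartbeats 1600000

noncomputable section

namespace QuadrantWalk

variable {K : Type} [Field K] [Algebra ℂ K]

/-! ### Auxiliary lemmas for stmt12 -/

section Aux

variable {K : Type} [Field K] [Algebra ℂ K]

lemma fixes_of_mem {E : IntermediateField ℂ K} (τ : K ≃ₐ[↥E] K) {z : K} (hz : z ∈ E) :
    τ z = z := by
  have : z = algebraMap ↥E K ⟨z, hz⟩ := rfl
  rw [this, AlgEquiv.commutes]

/-- An element of an algebraically closed algebraic extension fixed by all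
automorphisms lies in the base intermediate field. -/
lemma mem_of_fixed_all (E : IntermediateField ℂ K) [IsAlgClosed K]
    [Algebra.IsAlgebraic ↥E K] (z : K)
    (hz : ∀ τ : K ≃ₐ[↥E] K, τ z = z) : z ∈ E := by
  haveI : CharZero K := charZero_of_injective_algebraMap (algebraMap ℂ K).injective
  haveI : CharZero ↥E := (algebraMap ↥E K).charZero
  set F := ↥E
  have hint : IsIntegral F z := Algebra.IsAlgebraic.isIntegral.isIntegral z
  have hsp : ((minpoly F z).map (algebraMap F K)).Splits := IsAlgClosed.splits _
  have hsep : (minpoly F z).Separable := (minpoly.irreducible hint).separable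
  have hcard : (minpoly F z).natDegree = ((minpoly F z).map (algebraMap F K)).roots.card :=
    by rw [← Polynomial.natDegree_map (algebraMap F K)]; exact hsp.natDegree_eq_card_roots
  have hroots : ∀ r ∈ ((minpoly F z).map (algebraMap F K)).roots, r = z := by
    intro r hr
    have hr0 : Polynomial.aeval r (minpoly F z) = 0 := by
      have := Polynomial.isRoot_of_mem_roots hr
      rwa [Polynomial.IsRoot, Polynomial.eval_map, ← Polynomial.aeval_def] at this
    obtain ⟨φ, hφ⟩ := IntermediateField.exists_algHom_of_splits_of_aeval
      (fun s => ⟨Algebra.IsAlgebraic.isIntegral.isIntegral s, IsAlgClosed.splits _⟩) hr0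
    have hb := Algebra.IsAlgebraic.algHom_bijective φ
    have := hz (AlgEquiv.ofBijective φ hb)
    simp only [AlgEquiv.coe_ofBijective] at this
    rw [hφ] at this; exact this
  have hnd : ((minpoly F z).map (algebraMap F K)).roots.Nodup :=
    Polynomial.nodup_roots (hsep.map (f := algebraMap F K))
  have hle : ((minpoly F z).map (algebraMap F K)).roots.card ≤ 1 := by
    have hsub : ((minpoly F z).map (algebraMap F K)).roots ≤ {z} := by
      rw [Multiset.le_iff_subset hnd]
      intro r hr
      rw [hroots r hr]; simp
    simpa using Multiset.card_le_card hsub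
  have h1 : (minpoly F z).natDegree = 1 :=
    le_antisymm (hcard ▸ hle) (minpoly.natDegree_pos hint)
  obtain ⟨u, hu⟩ := minpoly.natDegree_eq_one_iff.mp h1
  rw [← hu]; exact u.2

/-- Algebraicity ascends along an inclusion of intermediate fields. -/
lemma algebraic_of_le {E₁ E₂ : IntermediateField ℂ K} (hle : E₁ ≤ E₂)
    (halg : Algebra.IsAlgebraic ↥E₁ K) : Algebra.IsAlgebraic ↥E₂ K := by
  constructor
  intro z
  obtain ⟨p, hp0, hpz⟩ := halg.isAlgebraic z
  refine ⟨p.map (IntermediateField.inclusion hle).toRingHom, Polynomial.map_ne_zero hp0, ?_⟩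
  rw [Polynomial.aeval_def, Polynomial.eval₂_map]
  have hcomp : (algebraMap ↥E₂ K).comp (IntermediateField.inclusion hle).toRingHom =
      algebraMap ↥E₁ K := RingHom.ext fun a => rfl
  rw [hcomp, ← Polynomial.aeval_def, hpz]

lemma sum_toNat_eq (St : Finset (ℤ × ℤ)) (w : ℤ × ℤ → ℂ) {mx my : ℕ}
    (hb : ExponentBounds St mx my) (u v : K) (hu : u ≠ 0) (hv : v ≠ 0) :
    ∑ p ∈ St, algebraMap ℂ K (w p) * u ^ (p.1 + (mx : ℤ)).toNat * v ^ (p.2 + (my : ℤ)).toNat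
      = u ^ mx * v ^ my * stepEval St w u v := by
  rw [stepEval, Finset.mul_sum]
  refine Finset.sum_congr rfl fun p hp => ?_
  have h1 : u ^ (p.1 + (mx : ℤ)).toNat = u ^ p.1 * u ^ (mx : ℕ) := by
    rw [← zpow_natCast u (p.1 + (mx : ℤ)).toNat,
      Int.toNat_of_nonneg (by linarith [hb.lowerX p hp]), zpow_add₀ hu, zpow_natCast]
  have h2 : v ^ (p.2 + (my : ℤ)).toNat = v ^ p.2 * v ^ (my : ℕ) := by
    rw [← zpow_natCast v (p.2 + (my : ℤ)).toNat,
      Int.toNat_of_nonneg (by linarith [hb.lowerY p hp]), zpow_add₀ hv, zpow_natCast]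
  rw [h1, h2]; ring

lemma aeval_monomial_pair (x y : K) (a b : ℕ) (c : ℂ) :
    MvPolynomial.aeval ![x, y]
        (MvPolynomial.monomial (Finsupp.single (0 : Fin 2) a + Finsupp.single 1 b) c)
      = algebraMap ℂ K c * x ^ a * y ^ b := by
  have : MvPolynomial.monomial (Finsupp.single (0 : Fin 2) a + Finsupp.single 1 b) c
      = MvPolynomial.C c * MvPolynomial.X 0 ^ a * MvPolynomial.X 1 ^ b := by
    rw [MvPolynomial.X_pow_eq_monomial, MvPolynomial.X_pow_eq_monomial, mul_assoc,
      MvPolynomial.monomial_mul, MvPolynomial.C_mul_monomial]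
    simp
  rw [this]
  simp [mul_assoc]

lemma pair_exponents_eq {a b a' b' : ℕ}
    (h : Finsupp.single (0 : Fin 2) a + Finsupp.single 1 b
        = Finsupp.single (0 : Fin 2) a' + Finsupp.single 1 b') : a = a' ∧ b = b' := by
  constructor
  · have h0 := DFunLike.congr_fun h 0
    simpa [Finsupp.single_apply] using h0
  · have h1 := DFunLike.congr_fun h 1
    simpa [Finsupp.single_apply] using h1

lemma coeff_sum_monomial_eq {ι : Type*} (T : Finset ι) (e : ι → (Fin 2 →₀ ℕ)) (c : ι → ℂ)
    (he : Set.InjOn e T) {q : ι} (hq : q ∈ T) :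
    MvPolynomial.coeff (e q) (∑ p ∈ T, MvPolynomial.monomial (e p) (c p)) = c q := by
  rw [MvPolynomial.coeff_sum]
  rw [Finset.sum_eq_single q]
  · simp [MvPolynomial.coeff_monomial]
  · intro p hp hne
    rw [MvPolynomial.coeff_monomial, if_neg]
    exact fun hep => hne (he hp hq hep)
  · exact fun h => absurd hq h

lemma coeff_sum_monomial_ne {ι : Type*} (T : Finset ι) (e : ι → (Fin 2 →₀ ℕ)) (c : ι → ℂ)
    {d : Fin 2 →₀ ℕ} (hd : ∀ p ∈ T, e p ≠ d) :
    MvPolynomial.coeff d (∑ p ∈ T, MvPolynomial.monomial (e p) (c p)) = 0 := by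
  rw [MvPolynomial.coeff_sum]
  refine Finset.sum_eq_zero fun p hp => ?_
  rw [MvPolynomial.coeff_monomial, if_neg (hd p hp)]

end Aux

section Core

variable {K : Type} [Field K] [Algebra ℂ K]

/-- The exponent vector of a step, shifted to be nonnegative. -/
def expPair (mx my : ℕ) (p : ℤ × ℤ) : Fin 2 →₀ ℕ :=
  Finsupp.single 0 (p.1 + (mx : ℤ)).toNat + Finsupp.single 1 (p.2 + (my : ℤ)).toNat

lemma ne_zero_of_indep {x y : K} (h : AlgebraicIndependent ℂ ![x, y]) : x ≠ 0 ∧ y ≠ 0 := by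
  have hinj : Function.Injective (MvPolynomial.aeval (R := ℂ) ![x, y]) :=
    algebraicIndependent_iff_injective_aeval.mp h
  constructor
  · intro h0
    have : (MvPolynomial.X 0 : MvPolynomial (Fin 2) ℂ) = 0 := hinj (by simp [h0])
    exact MvPolynomial.X_ne_zero 0 this
  · intro h0
    have : (MvPolynomial.X 1 : MvPolynomial (Fin 2) ℂ) = 0 := hinj (by simp [h0])
    exact MvPolynomial.X_ne_zero 1 this

lemma poly_eq_of_eval_eq {x y : K} (hind : AlgebraicIndependent ℂ ![x, y])
    {P Q : MvPolynomial (Fin 2) ℂ}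
    (h : MvPolynomial.aeval ![x, y] P = MvPolynomial.aeval ![x, y] Q) : P = Q :=
  (algebraicIndependent_iff_injective_aeval.mp hind) h

lemma expPair_injOn {St : Finset (ℤ × ℤ)} {mx my : ℕ} (hb : ExponentBounds St mx my) :
    Set.InjOn (expPair mx my) St := by
  intro p hp q hq h
  obtain ⟨h1, h2⟩ := pair_exponents_eq h
  have e1 := congrArg (Nat.cast : ℕ → ℤ) h1
  have e2 := congrArg (Nat.cast : ℕ → ℤ) h2
  rw [Int.toNat_of_nonneg (by linarith [hb.lowerX p hp]),
    Int.toNat_of_nonneg (by linarith [hb.lowerX q hq])] at e1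
  rw [Int.toNat_of_nonneg (by linarith [hb.lowerY p hp]),
    Int.toNat_of_nonneg (by linarith [hb.lowerY q hq])] at e2
  exact Prod.ext (by omega) (by omega)

lemma aeval_expPair_sum (x y : K) {mx my : ℕ} (T : Finset (ℤ × ℤ)) (w : ℤ × ℤ → ℂ) :
    MvPolynomial.aeval ![x, y] (∑ p ∈ T, MvPolynomial.monomial (expPair mx my p) (w p))
      = ∑ p ∈ T, algebraMap ℂ K (w p) * x ^ (p.1 + (mx : ℤ)).toNat
          * y ^ (p.2 + (my : ℤ)).toNat := by
  rw [map_sum]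
  exact Finset.sum_congr rfl fun p _ => aeval_monomial_pair x y _ _ _

lemma stepEval_ne_zero (St : Finset (ℤ × ℤ)) (w : ℤ × ℤ → ℂ) (x y : K) {mx my : ℕ}
    (hw : ∀ p ∈ St, w p ≠ 0) (hb : ExponentBounds St mx my) (hne : St.Nonempty)
    (hind : AlgebraicIndependent ℂ ![x, y]) : stepEval St w x y ≠ 0 := by
  obtain ⟨hx0, hy0⟩ := ne_zero_of_indep hind
  intro h0
  have hkey : MvPolynomial.aeval ![x, y]
      (∑ p ∈ St, MvPolynomial.monomial (expPair mx my p) (w p)) = 0 := by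
    rw [aeval_expPair_sum, sum_toNat_eq St w hb x y hx0 hy0, h0, mul_zero]
  have hP : (∑ p ∈ St, MvPolynomial.monomial (expPair mx my p) (w p)) = 0 :=
    poly_eq_of_eval_eq hind (by rw [hkey, map_zero])
  obtain ⟨q, hq⟩ := hne
  have hc := coeff_sum_monomial_eq St (expPair mx my) w (expPair_injOn hb) hq
  rw [hP] at hc
  simp only [MvPolynomial.coeff_zero] at hc
  exact hw q hq hc.symm

end Core

section CoreAlg

variable {K : Type} [Field K] [Algebra ℂ K]

lemma coe_algC (E : IntermediateField ℂ K) (c : ℂ) :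
    ((algebraMap ℂ ↥E c : ↥E) : K) = algebraMap ℂ K c :=
  (IsScalarTower.algebraMap_apply ℂ ↥E K c).symm

lemma y_algebraic_aux (St : Finset (ℤ × ℤ)) (w : ℤ × ℤ → ℂ) (x y : K) (mx my : ℕ)
    (hw : ∀ p ∈ St, w p ≠ 0) (hb : ExponentBounds St mx my)
    (huniv : ∃ p ∈ St, ∃ q ∈ St, p.2 ≠ q.2)
    (hind : AlgebraicIndependent ℂ ![x, y]) :
    IsAlgebraic ↥(kxF St w x y) y := by
  obtain ⟨hx0, hy0⟩ := ne_zero_of_indep hind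
  have hne : St.Nonempty := by obtain ⟨p, hp, -⟩ := huniv; exact ⟨p, hp⟩
  have hS0 : stepEval St w x y ≠ 0 := stepEval_ne_zero St w x y hw hb hne hind
  set F := kxF St w x y with hF
  set xF : ↥F := ⟨x, x_mem_kxF St w x y⟩ with hxF
  set sF : ↥F := ⟨stepEval St w x y, S_mem_kxF St w x y⟩ with hsF
  set cf : ℤ × ℤ → ↥F := fun p => algebraMap ℂ ↥F (w p) * xF ^ (p.1 + (mx : ℤ)).toNat with hcf
  set Q : Polynomial ↥F :=
    Polynomial.C (xF ^ mx * sF) * Polynomial.X ^ my -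
      ∑ p ∈ St, Polynomial.C (cf p) * Polynomial.X ^ (p.2 + (my : ℤ)).toNat with hQ
  have hcoe_cf : ∀ p, ((cf p : ↥F) : K)
      = algebraMap ℂ K (w p) * x ^ (p.1 + (mx : ℤ)).toNat := by
    intro p
    push_cast [hcf]
    rfl
  have hcoeff : Q.coeff 0 = (if 0 = my then xF ^ mx * sF else 0) -
      ∑ p ∈ St.filter (fun p => (0 : ℕ) = (p.2 + (my : ℤ)).toNat), cf p := by
    simp only [hQ, Polynomial.coeff_sub, Polynomial.coeff_C_mul, Polynomial.coeff_X_pow,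
      Polynomial.finset_sum_coeff, mul_ite, mul_one, mul_zero]
    rw [Finset.sum_filter]
  have htn : ∀ p ∈ St, ((0 : ℕ) = (p.2 + (my : ℤ)).toNat ↔ p.2 = -(my : ℤ)) := by
    intro p hp
    have := hb.lowerY p hp
    omega
  -- Q is nonzero
  have hQ0 : Q ≠ 0 := by
    intro hzero
    have hc0 : Q.coeff 0 = 0 := by rw [hzero]; simp
    rw [hcoeff] at hc0
    by_cases hmy : my = 0
    · -- case my = 0 : x^mx * S = ∑_{p.2 = 0} w_p x^(a p)
      subst hmy
      rw [if_pos rfl, sub_eq_zero] at hc0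
      have hKid : (x : K) ^ mx * stepEval St w x y
          = ∑ p ∈ St.filter (fun p => (0 : ℕ) = (p.2 + ((0 : ℕ) : ℤ)).toNat),
              ((cf p : ↥F) : K) := by
        have h' := congrArg (Subtype.val : ↥F → K) hc0
        rw [AddSubmonoidClass.coe_finset_sum] at h'
        rw [← h', MulMemClass.coe_mul, SubmonoidClass.coe_pow]
      -- left side as a polynomial evaluation
      have hL : MvPolynomial.aeval ![x, y]
          (∑ p ∈ St, MvPolynomial.monomial (expPair mx 0 p) (w p))
          = (x : K) ^ mx * stepEval St w x y := by
        rw [aeval_expPair_sum, sum_toNat_eq St w hb x y hx0 hy0]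
        simp
      have hR : MvPolynomial.aeval ![x, y]
          (∑ p ∈ St.filter (fun p => (0 : ℕ) = (p.2 + ((0 : ℕ) : ℤ)).toNat),
            MvPolynomial.monomial (expPair mx 0 p) (w p))
          = ∑ p ∈ St.filter (fun p => (0 : ℕ) = (p.2 + ((0 : ℕ) : ℤ)).toNat),
              ((cf p : ↥F) : K) := by
        rw [aeval_expPair_sum]
        refine Finset.sum_congr rfl fun p hp => ?_
        obtain ⟨hpSt, hp0⟩ := Finset.mem_filter.mp hp
        have h0' : (p.2 + ((0 : ℕ) : ℤ)).toNat = 0 := by omega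
        rw [hcoe_cf p, h0', pow_zero, mul_one]
      have hPeq : (∑ p ∈ St, MvPolynomial.monomial (expPair mx 0 p) (w p))
          = ∑ p ∈ St.filter (fun p => (0 : ℕ) = (p.2 + ((0 : ℕ) : ℤ)).toNat),
              MvPolynomial.monomial (expPair mx 0 p) (w p) :=
        poly_eq_of_eval_eq hind (by rw [hL, hR]; exact hKid)
      -- pick a step with nonzero second coordinate
      obtain ⟨p1, hp1, q1, hq1, hpq⟩ := huniv
      have hr : ∃ r ∈ St, r.2 ≠ 0 := by
        by_cases h1 : p1.2 = 0
        · exact ⟨q1, hq1, by omega⟩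
        · exact ⟨p1, hp1, h1⟩
      obtain ⟨r, hrSt, hr2⟩ := hr
      have hcr := coeff_sum_monomial_eq St (expPair mx 0) w (expPair_injOn hb) hrSt
      rw [hPeq] at hcr
      have hcr0 : MvPolynomial.coeff (expPair mx 0 r)
          (∑ p ∈ St.filter (fun p => (0 : ℕ) = (p.2 + ((0 : ℕ) : ℤ)).toNat),
            MvPolynomial.monomial (expPair mx 0 p) (w p)) = 0 := by
        refine coeff_sum_monomial_ne _ _ _ fun p hp => ?_
        obtain ⟨hpSt, hp0⟩ := Finset.mem_filter.mp hp
        intro heq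
        obtain ⟨-, h2⟩ := pair_exponents_eq heq
        have hbp := hb.lowerY p hpSt
        have hbr := hb.lowerY r hrSt
        omega
      rw [hcr0] at hcr
      exact hw r hrSt hcr.symm
    · -- case my ≠ 0 : ∑_{p.2 = -my} w_p x^(a p) = 0
      rw [if_neg (by omega), zero_sub, neg_eq_zero] at hc0
      have hKid : ∑ p ∈ St.filter (fun p => (0 : ℕ) = (p.2 + (my : ℤ)).toNat),
          ((cf p : ↥F) : K) = 0 := by
        have h' := congrArg (Subtype.val : ↥F → K) hc0
        rw [AddSubmonoidClass.coe_finset_sum] at h'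
        exact h'
      have hR : MvPolynomial.aeval ![x, y]
          (∑ p ∈ St.filter (fun p => (0 : ℕ) = (p.2 + (my : ℤ)).toNat),
            MvPolynomial.monomial (expPair mx my p) (w p))
          = ∑ p ∈ St.filter (fun p => (0 : ℕ) = (p.2 + (my : ℤ)).toNat),
            ((cf p : ↥F) : K) := by
        rw [aeval_expPair_sum]
        refine Finset.sum_congr rfl fun p hp => ?_
        obtain ⟨hpSt, hp0⟩ := Finset.mem_filter.mp hp
        have h0' : (p.2 + (my : ℤ)).toNat = 0 := by omega
        rw [hcoe_cf p, h0', pow_zero, mul_one]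
      have hPeq := poly_eq_of_eval_eq hind
        (P := ∑ p ∈ St.filter (fun p => (0 : ℕ) = (p.2 + (my : ℤ)).toNat),
          MvPolynomial.monomial (expPair mx my p) (w p)) (Q := 0)
        (by rw [hR, hKid, map_zero])
      obtain ⟨q, hqSt, hq2⟩ := hb.attainY
      have hqf : q ∈ St.filter (fun p => (0 : ℕ) = (p.2 + (my : ℤ)).toNat) :=
        Finset.mem_filter.mpr ⟨hqSt, by omega⟩
      have hcq := coeff_sum_monomial_eq _ (expPair mx my) w
        ((expPair_injOn hb).mono (Finset.filter_subset _ _)) hqf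
      rw [hPeq] at hcq
      simp only [MvPolynomial.coeff_zero] at hcq
      exact hw q hqSt hcq.symm
  -- Q annihilates y
  have hQy : Polynomial.aeval y Q = 0 := by
    rw [hQ]
    simp only [map_sub, map_mul, map_sum, Polynomial.aeval_C, map_pow, Polynomial.aeval_X]
    have e1 : algebraMap ↥F K xF = x := rfl
    have e2 : algebraMap ↥F K sF = stepEval St w x y := rfl
    have e3 : ∀ p, algebraMap ↥F K (cf p)
        = algebraMap ℂ K (w p) * x ^ (p.1 + (mx : ℤ)).toNat := fun p => hcoe_cf p
    rw [e1, e2]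
    have h3 : ∑ p ∈ St, algebraMap ↥F K (cf p) * y ^ (p.2 + (my : ℤ)).toNat
        = x ^ mx * y ^ my * stepEval St w x y := by
      rw [← sum_toNat_eq St w hb x y hx0 hy0]
      exact Finset.sum_congr rfl fun p _ => by rw [e3 p]
    rw [h3]
    ring
  exact ⟨Q, hQ0, hQy⟩

end CoreAlg

section Swap

variable {K : Type} [Field K] [Algebra ℂ K]

lemma x_algebraic_aux (St : Finset (ℤ × ℤ)) (w : ℤ × ℤ → ℂ) (x y : K) (mx my : ℕ)
    (hw : ∀ p ∈ St, w p ≠ 0) (hb : ExponentBounds St mx my)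
    (huniv : ∃ p ∈ St, ∃ q ∈ St, p.1 ≠ q.1)
    (hind : AlgebraicIndependent ℂ ![x, y]) :
    IsAlgebraic ↥(kyF St w x y) x := by
  set St' : Finset (ℤ × ℤ) := St.image Prod.swap with hSt'
  set w' : ℤ × ℤ → ℂ := fun p => w p.swap with hw'def
  have hswap_inj : Function.Injective (Prod.swap : ℤ × ℤ → ℤ × ℤ) := Prod.swap_injective
  have hmem : ∀ p, p ∈ St' ↔ p.swap ∈ St := by
    intro p
    constructor
    · intro hp
      obtain ⟨q, hq, rfl⟩ := Finset.mem_image.mp hp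
      simpa using hq
    · intro hp
      exact Finset.mem_image.mpr ⟨p.swap, hp, by simp⟩
  have hstep : stepEval St' w' y x = stepEval St w x y := by
    rw [stepEval, stepEval, hSt', Finset.sum_image (fun a _ b _ h => hswap_inj h)]
    refine Finset.sum_congr rfl fun p _ => ?_
    simp only [hw'def, Prod.swap_swap, Prod.fst_swap, Prod.snd_swap]
    ring
  have hb' : ExponentBounds St' my mx := by
    constructor
    · intro p hp; exact hb.lowerY p.swap ((hmem p).mp hp)
    · intro p hp; exact hb.lowerX p.swap ((hmem p).mp hp)
    · obtain ⟨q, hq, h2⟩ := hb.attainY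
      exact ⟨q.swap, (hmem q.swap).mpr (by simpa using hq), h2⟩
    · obtain ⟨q, hq, h2⟩ := hb.attainX
      exact ⟨q.swap, (hmem q.swap).mpr (by simpa using hq), h2⟩
  have hw'' : ∀ p ∈ St', w' p ≠ 0 := fun p hp => hw p.swap ((hmem p).mp hp)
  have huniv' : ∃ p ∈ St', ∃ q ∈ St', p.2 ≠ q.2 := by
    obtain ⟨p, hp, q, hq, hpq⟩ := huniv
    exact ⟨p.swap, (hmem p.swap).mpr (by simpa using hp),
      q.swap, (hmem q.swap).mpr (by simpa using hq), by simpa using hpq⟩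
  have hind' : AlgebraicIndependent ℂ ![y, x] := by
    have h := hind.comp ![1, 0] (by decide)
    have : ![x, y] ∘ ![1, 0] = ![y, x] := by
      funext i; fin_cases i <;> rfl
    rwa [this] at h
  have halg : IsAlgebraic ↥(kxF St' w' y x) x :=
    y_algebraic_aux St' w' y x my mx hw'' hb' huniv' hind'
  have hk : kxF St' w' y x = kyF St w x y := by
    rw [kxF, kyF, hstep]
  rwa [hk] at halg

end Swap

section AlgTrans

variable {K : Type} [Field K] [Algebra ℂ K]

lemma algebraic_K_over (E : IntermediateField ℂ K) (x y : K)
    (halgK : Algebra.IsAlgebraic ↥(kxyF x y) K) (t : K) (ht : IsAlgebraic ↥E t)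
    (hx : x ∈ E ∨ x = t) (hy : y ∈ E ∨ y = t) : Algebra.IsAlgebraic ↥E K := by
  have hint : IsIntegral ↥E t := ht.isIntegral
  set Emid : IntermediateField ↥E K := IntermediateField.adjoin ↥E {t} with hEmid
  haveI : FiniteDimensional ↥E ↥Emid := IntermediateField.adjoin.finiteDimensional hint
  haveI h1 : Algebra.IsAlgebraic ↥E ↥Emid := Algebra.IsAlgebraic.of_finite _ _
  have hmemt : t ∈ Emid := IntermediateField.mem_adjoin_simple_self ↥E t
  have hmem : ∀ z : K, z ∈ E ∨ z = t → z ∈ Emid := by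
    rintro z (hz | rfl)
    · exact Emid.algebraMap_mem ⟨z, hz⟩
    · exact hmemt
  have hle : kxyF x y ≤ IntermediateField.restrictScalars ℂ Emid := by
    rw [kxyF, IntermediateField.adjoin_le_iff]
    rintro z hz
    rcases Set.mem_insert_iff.mp hz with rfl | hz'
    · exact hmem z hx
    · rw [Set.mem_singleton_iff.mp hz']
      exact hmem y hy
  haveI h2 : Algebra.IsAlgebraic ↥(IntermediateField.restrictScalars ℂ Emid) K :=
    algebraic_of_le hle halgK
  haveI h2' : Algebra.IsAlgebraic ↥Emid K := h2
  exact Algebra.IsAlgebraic.trans ↥E ↥Emid K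

end AlgTrans

section Invariance

variable {K : Type} [Field K] [Algebra ℂ K]

lemma tau_aeval (τ : K →+* K) (hτc : ∀ c : ℂ, τ (algebraMap ℂ K c) = algebraMap ℂ K c)
    (v : Fin 3 → K) (P : MvPolynomial (Fin 3) ℂ) :
    τ (MvPolynomial.aeval v P) = MvPolynomial.aeval (fun i => τ (v i)) P := by
  induction P using MvPolynomial.induction_on with
  | C c => simp [MvPolynomial.algHom_C, hτc]
  | add p q hp hq => simp [map_add, hp, hq]
  | mul_X p n hp => simp [map_mul, hp]

lemma tau_stepEval (St : Finset (ℤ × ℤ)) (w : ℤ × ℤ → ℂ) (τ : K →+* K)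
    (hτc : ∀ c : ℂ, τ (algebraMap ℂ K c) = algebraMap ℂ K c) (u v : K) :
    τ (stepEval St w u v) = stepEval St w (τ u) (τ v) := by
  simp [stepEval, map_sum, map_mul, map_zpow₀, hτc]

lemma tau_orbit (St : Finset (ℤ × ℤ)) (w : ℤ × ℤ → ℂ) (x y : K) (τ : K →+* K)
    (hτc : ∀ c : ℂ, τ (algebraMap ℂ K c) = algebraMap ℂ K c)
    (hτS : τ (stepEval St w x y) = stepEval St w x y)
    (hxy : τ x = x ∨ τ y = y) :
    ∀ a ∈ orbit St w x y, (τ a.1, τ a.2) ∈ orbit St w x y := by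
  have hadj : ∀ a b : K × K, Adj St w a b → Adj St w (τ a.1, τ a.2) (τ b.1, τ b.2) := by
    rintro a b (⟨h1, h2⟩ | ⟨h1, h2⟩)
    · exact Or.inl ⟨congrArg τ h1,
        by rw [← tau_stepEval St w τ hτc, ← tau_stepEval St w τ hτc, h2]⟩
    · exact Or.inr ⟨congrArg τ h1,
        by rw [← tau_stepEval St w τ hτc, ← tau_stepEval St w τ hτc, h2]⟩
  have hbase : Adj St w (x, y) (τ x, τ y) := by
    rcases hxy with h | h
    · exact Or.inl ⟨h.symm, by rw [← tau_stepEval St w τ hτc]; exact hτS.symm⟩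
    · exact Or.inr ⟨h.symm, by rw [← tau_stepEval St w τ hτc]; exact hτS.symm⟩
  intro a ha
  induction ha with
  | refl => exact Relation.ReflTransGen.single hbase
  | tail h1 h2 ih => exact ih.tail (hadj _ _ h2)

lemma chainEval_omega (St : Finset (ℤ × ℤ)) (w : ℤ × ℤ → ℂ) (x y : K)
    (A B : MvPolynomial (Fin 3) ℂ) (hfin : (orbit St w x y).Finite) :
    chainEval St w x y A B (omegaChain St w x y hfin)
      = algebraMap ℂ K ((hfin.toFinset.card : ℂ))⁻¹ *
          ∑ a ∈ hfin.toFinset, fracEval St w x y A B a := by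
  rw [chainEval, omegaChain]
  have hsupp : (((hfin.toFinset.card : ℂ))⁻¹ •
      ∑ a ∈ hfin.toFinset, Finsupp.single a (1 : ℂ)).support ⊆ hfin.toFinset := by
    refine Finsupp.support_smul.trans ?_
    refine (Finsupp.support_finset_sum).trans ?_
    intro a ha
    obtain ⟨b, hb, hab⟩ := Finset.mem_biUnion.mp ha
    have := Finsupp.support_single_subset hab
    rw [Finset.mem_singleton.mp this]
    exact hb
  rw [Finsupp.sum_of_support_subset _ hsupp _ (fun a _ => by simp)]
  rw [Finset.mul_sum]
  refine Finset.sum_congr rfl fun a ha => ?_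
  have hval : ((((hfin.toFinset.card : ℂ))⁻¹ •
      ∑ b ∈ hfin.toFinset, Finsupp.single b (1 : ℂ)) a) = ((hfin.toFinset.card : ℂ))⁻¹ := by
    rw [Finsupp.smul_apply, Finsupp.finset_sum_apply]
    rw [show (∑ b ∈ hfin.toFinset, (Finsupp.single b (1 : ℂ)) a) = 1 by
      rw [Finset.sum_congr rfl (fun b _ => Finsupp.single_apply)]
      rw [Finset.sum_ite_eq' hfin.toFinset a (fun _ => (1 : ℂ))]
      rw [if_pos ha]]
    rw [smul_eq_mul, mul_one]
  rw [hval]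

end Invariance

section MainInv

variable {K : Type} [Field K] [Algebra ℂ K]

lemma tau_invariant (St : Finset (ℤ × ℤ)) (w : ℤ × ℤ → ℂ) (x y : K)
    (A B : MvPolynomial (Fin 3) ℂ) (hfin : (orbit St w x y).Finite)
    (τ : K →+* K)
    (hτc : ∀ c : ℂ, τ (algebraMap ℂ K c) = algebraMap ℂ K c)
    (hτS : τ (stepEval St w x y) = stepEval St w x y)
    (hxy : τ x = x ∨ τ y = y) :
    τ (chainEval St w x y A B (omegaChain St w x y hfin))
      = chainEval St w x y A B (omegaChain St w x y hfin) := by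
  have hτinj : Function.Injective τ := τ.injective
  rw [chainEval_omega, map_mul, hτc, map_sum]
  congr 1
  set f : K × K → K × K := fun a => (τ a.1, τ a.2) with hf
  have hmap : ∀ a, τ (fracEval St w x y A B a) = fracEval St w x y A B (f a) := by
    intro a
    rw [fracEval, fracEval, map_div₀]
    have hvec : ∀ P : MvPolynomial (Fin 3) ℂ,
        τ (evalPt St w x y P a) = evalPt St w x y P (f a) := by
      intro P
      rw [evalPt, evalPt, tau_aeval τ hτc]
      have hv : (fun i => τ (![a.1, a.2, (stepEval St w x y)⁻¹] i))
          = ![(f a).1, (f a).2, (stepEval St w x y)⁻¹] := by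
        funext i
        fin_cases i <;> simp [map_inv₀, hτS, hf]
      rw [hv]
    rw [hvec A, hvec B]
  have hinjOn : Set.InjOn f hfin.toFinset := fun a _ b _ h =>
    Prod.ext (hτinj (congrArg Prod.fst h)) (hτinj (congrArg Prod.snd h))
  have hsub : hfin.toFinset.image f ⊆ hfin.toFinset := by
    intro b hb
    obtain ⟨a, ha, rfl⟩ := Finset.mem_image.mp hb
    rw [Set.Finite.mem_toFinset] at ha ⊢
    exact tau_orbit St w x y τ hτc hτS hxy a ha
  have himg : hfin.toFinset.image f = hfin.toFinset := by
    apply Finset.eq_of_subset_of_card_le hsub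
    rw [Finset.card_image_of_injOn hinjOn]
  calc ∑ a ∈ hfin.toFinset, τ (fracEval St w x y A B a)
      = ∑ a ∈ hfin.toFinset, fracEval St w x y A B (f a) :=
        Finset.sum_congr rfl fun a _ => hmap a
    _ = ∑ b ∈ hfin.toFinset.image f, fracEval St w x y A B b :=
        (Finset.sum_image (fun a ha b hb h => hinjOn ha hb h)).symm
    _ = ∑ b ∈ hfin.toFinset, fracEval St w x y A B b := by rw [himg]

end MainInv
end QuadrantWalk
namespace QuadrantWalk

/-- if the orbit is finite and `ω = (1/|𝒪|) ∑_{a ∈ 𝒪} a`, then for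
every regular fraction `H = A/B` the orbit sum `H_ω` is a Galois invariant: it is
fixed by every element of the group of the walk `G = ⟨G_x, G_y⟩`, and it lies in
`k(x) ∩ k(y)`. -/
theorem stmt12 {K : Type} [Field K] [Algebra ℂ K]
    (St : Finset (ℤ × ℤ)) (w : ℤ × ℤ → ℂ) (x y : K) (mx my : ℕ)
    (hset : Setting St w x y) (hb : ExponentBounds St mx my)
    (hfin : (orbit St w x y).Finite) :
    ∀ A B : MvPolynomial (Fin 3) ℂ, ¬ kernelPoly St w mx my ∣ B →
      (∀ σ ∈ Gx St w x y ⊔ Gy St w x y,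
        extendAut σ (chainEval St w x y A B (omegaChain St w x y hfin)) =
          chainEval St w x y A B (omegaChain St w x y hfin)) ∧
      chainEval St w x y A B (omegaChain St w x y hfin) ∈
        kxF St w x y ⊓ kyF St w x y := by
  intro A B _hB
  haveI : IsAlgClosed K := hset.algClosed
  have halgK := hset.algebraic
  have hyal : IsAlgebraic ↥(kxF St w x y) y :=
    y_algebraic_aux St w x y mx my hset.weight_ne hb hset.notUniv.2 hset.indep
  have hxal : IsAlgebraic ↥(kyF St w x y) x :=
    x_algebraic_aux St w x y mx my hset.weight_ne hb hset.notUniv.1 hset.indep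
  haveI halgx : Algebra.IsAlgebraic ↥(kxF St w x y) K :=
    algebraic_K_over _ x y halgK y hyal (Or.inl (x_mem_kxF St w x y)) (Or.inr rfl)
  haveI halgy : Algebra.IsAlgebraic ↥(kyF St w x y) K :=
    algebraic_K_over _ x y halgK x hxal (Or.inr rfl) (Or.inl (y_mem_kyF St w x y))
  have hmemx : chainEval St w x y A B (omegaChain St w x y hfin) ∈ kxF St w x y := by
    apply mem_of_fixed_all
    intro τ
    have h1 : ∀ c : ℂ, τ (algebraMap ℂ K c) = algebraMap ℂ K c := fun c =>
      fixes_of_mem τ ((kxF St w x y).algebraMap_mem c)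
    have h2 : τ (stepEval St w x y) = stepEval St w x y :=
      fixes_of_mem τ (S_mem_kxF St w x y)
    have h3 : τ x = x := fixes_of_mem τ (x_mem_kxF St w x y)
    exact tau_invariant St w x y A B hfin τ.toAlgHom.toRingHom h1 h2 (Or.inl h3)
  have hmemy : chainEval St w x y A B (omegaChain St w x y hfin) ∈ kyF St w x y := by
    apply mem_of_fixed_all
    intro τ
    have h1 : ∀ c : ℂ, τ (algebraMap ℂ K c) = algebraMap ℂ K c := fun c =>
      fixes_of_mem τ ((kyF St w x y).algebraMap_mem c)
    have h2 : τ (stepEval St w x y) = stepEval St w x y :=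
      fixes_of_mem τ (S_mem_kyF St w x y)
    have h3 : τ y = y := fixes_of_mem τ (y_mem_kyF St w x y)
    exact tau_invariant St w x y A B hfin τ.toAlgHom.toRingHom h1 h2 (Or.inr h3)
  have hmem : chainEval St w x y A B (omegaChain St w x y hfin) ∈
      kxF St w x y ⊓ kyF St w x y := ⟨hmemx, hmemy⟩
  refine ⟨?_, hmem⟩
  intro σ hσ
  have hσ' : σ ∈ fixingAuts (kxF St w x y ⊓ kyF St w x y) (orbitF St w x y) := by
    have hle : Gx St w x y ⊔ Gy St w x y ≤
        fixingAuts (kxF St w x y ⊓ kyF St w x y) (orbitF St w x y) := by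
      apply sup_le
      · intro g hg z hzE hzM
        exact hg z hzE.1 hzM
      · intro g hg z hzE hzM
        exact hg z hzE.2 hzM
    exact hle hσ
  unfold extendAut
  split
  · next h => exact congrArg Subtype.val (hσ' _ hmem h)
  · rfl

end QuadrantWalk
end
end
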